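/- arXiv:2404.05855 — 2 statements merged into one kernel-verified Lean document; each statement's English description precedes it below -/
import Mathlib

section
/- Let 𝒳 be a complex Banach space and T > 0. An evolution family on [0,T] is a two-parameter family of bounded linear operators U(t,s) : 𝒳 → 𝒳, defined for 0 ≤ s ≤ t ≤ T, such that U(t,r)U(r,s) = U(t,s) for all 0 ≤ s ≤ r ≤ t ≤ T, U(s,s) = I for all s ∈ [0,T], and (t,s) ↦ U(t,s)x is continuous for every x ∈ 𝒳; set M₀ = sup_{0 ≤ s ≤ t ≤ T} ‖U(t,s)‖ and assume M₀ < ∞. Let F : [0,T] × 𝒳 → 𝒳 be continuous with F(t,0) = 0 for all t, and assume that for every τ ∈ (0,T] and ρ > 0 there is L_{τ,ρ} ≥ 0, nondecreasing in both τ and ρ, with ‖F(t,x) − F(t,y)‖ ≤ L_{τ,ρ}‖x − y‖ for all t ∈ [0,τ] and all x, y with ‖x‖ ≤ ρ, ‖y‖ ≤ ρ. Let X₀ ∈ 𝒳, let 0 < t⁺ < T, and let X : [0, t⁺) → 𝒳 be a continuous function satisfying X(t) = U(t,0)X₀ + ∫₀ᵗ U(t,s)F(s, X(s)) ds for all t ∈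 [0, t⁺), and suppose that X cannot be extended to a mild solution on any interval [0, σ] with t⁺ ≤ σ ≤ T. Then ‖X(t)‖ → +∞ as t → t⁺ from the left. -/
open MeasureTheory Filter

lemma aux_contU {𝒳 : Type*} [NormedAddCommGroup 𝒳] [NormedSpace ℂ 𝒳]
    (T : ℝ) (U : ℝ → ℝ → 𝒳 →L[ℂ] 𝒳)
    (hUcont : ∀ x : 𝒳, ContinuousOn (fun p : ℝ × ℝ => U p.1 p.2 x)
      {p : ℝ × ℝ | 0 ≤ p.2 ∧ p.2 ≤ p.1 ∧ p.1 ≤ T})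
    (M₁ : ℝ) (hM₁ : ∀ s t : ℝ, 0 ≤ s → s ≤ t → t ≤ T → ‖U t s‖ ≤ M₁)
    (t : ℝ) (ht : t ≤ T) (y : ℝ → 𝒳) (A : Set ℝ) (hA : A ⊆ Set.Icc 0 t)
    (hy : ContinuousOn y A) :
    ContinuousOn (fun s => U t s (y s)) A := by
  intro s₀ hs₀
  have hmemA : ∀ᶠ s in nhdsWithin s₀ A, s ∈ A := eventually_mem_nhdsWithin
  have hm : Tendsto (fun s => ((t, s) : ℝ × ℝ)) (nhdsWithin s₀ A)
      (nhdsWithin (t, s₀) {p : ℝ × ℝ | 0 ≤ p.2 ∧ p.2 ≤ p.1 ∧ p.1 ≤ T}) := by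
    rw [tendsto_nhdsWithin_iff]
    constructor
    · exact ((continuous_const.prodMk continuous_id).tendsto s₀).mono_left nhdsWithin_le_nhds
    · filter_upwards [hmemA] with s hs
      exact ⟨(hA hs).1, (hA hs).2, ht⟩
  have hs₀S : ((t, s₀) : ℝ × ℝ) ∈ {p : ℝ × ℝ | 0 ≤ p.2 ∧ p.2 ≤ p.1 ∧ p.1 ≤ T} :=
    ⟨(hA hs₀).1, (hA hs₀).2, ht⟩
  have h₁ : Tendsto (fun s => U t s (y s₀)) (nhdsWithin s₀ A) (nhds (U t s₀ (y s₀))) :=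
    Tendsto.comp (hUcont (y s₀) _ hs₀S) hm
  have h₂ : Tendsto (fun s => U t s (y s - y s₀)) (nhdsWithin s₀ A) (nhds 0) := by
    apply squeeze_zero_norm' (a := fun s => M₁ * ‖y s - y s₀‖)
    · filter_upwards [hmemA] with s hs
      calc ‖U t s (y s - y s₀)‖ ≤ ‖U t s‖ * ‖y s - y s₀‖ := (U t s).le_opNorm _
        _ ≤ M₁ * ‖y s - y s₀‖ :=
          mul_le_mul_of_nonneg_right (hM₁ s t (hA hs).1 (hA hs).2 ht) (norm_nonneg _)
    · have h3 : Tendsto (fun s => y s - y s₀) (nhdsWithin s₀ A) (nhds (y s₀ - y s₀)) :=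
        (hy s₀ hs₀).sub tendsto_const_nhds
      have := (h3.norm).const_mul M₁
      rwa [sub_self, norm_zero, mul_zero] at this
  have hsum := h₂.add h₁
  rw [zero_add] at hsum
  refine hsum.congr ?_
  intro s
  rw [← map_add, sub_add_cancel]


/-- Blow-up alternative: if a mild solution of the semilinear non-autonomous evolution
equation on `[0, t⁺)` with `t⁺ < T` cannot be extended to a mild solution on any
interval `[0, σ]` with `t⁺ ≤ σ ≤ T`, then its norm diverges as `t → t⁺⁻`. -/
theorem mild_solution_blow_up {𝒳 : Type*} [NormedAddCommGroup 𝒳]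
    [NormedSpace ℂ 𝒳] [CompleteSpace 𝒳]
    (T : ℝ) (hT : 0 < T)
    (U : ℝ → ℝ → 𝒳 →L[ℂ] 𝒳)
    (hUcomp : ∀ s r t : ℝ, 0 ≤ s → s ≤ r → r ≤ t → t ≤ T →
      (U t r).comp (U r s) = U t s)
    (hUid : ∀ s : ℝ, 0 ≤ s → s ≤ T → U s s = ContinuousLinearMap.id ℂ 𝒳)
    (hUcont : ∀ x : 𝒳, ContinuousOn (fun p : ℝ × ℝ => U p.1 p.2 x)
      {p : ℝ × ℝ | 0 ≤ p.2 ∧ p.2 ≤ p.1 ∧ p.1 ≤ T})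
    (M₀ : ℝ) (hM₀ : ∀ s t : ℝ, 0 ≤ s → s ≤ t → t ≤ T → ‖U t s‖ ≤ M₀)
    (F : ℝ → 𝒳 → 𝒳)
    (hF : ContinuousOn (fun p : ℝ × 𝒳 => F p.1 p.2) (Set.Icc 0 T ×ˢ Set.univ))
    (hF0 : ∀ t ∈ Set.Icc (0:ℝ) T, F t 0 = 0)
    (L : ℝ → ℝ → ℝ)
    (hL0 : ∀ τ ρ : ℝ, 0 < τ → τ ≤ T → 0 < ρ → 0 ≤ L τ ρ)
    (hLmono : ∀ τ₁ τ₂ ρ₁ ρ₂ : ℝ, 0 < τ₁ → τ₁ ≤ τ₂ → τ₂ ≤ T → 0 < ρ₁ → ρ₁ ≤ ρ₂ →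
      L τ₁ ρ₁ ≤ L τ₂ ρ₂)
    (hLip : ∀ τ ρ : ℝ, 0 < τ → τ ≤ T → 0 < ρ → ∀ t ∈ Set.Icc (0:ℝ) τ, ∀ x y : 𝒳,
      ‖x‖ ≤ ρ → ‖y‖ ≤ ρ → ‖F t x - F t y‖ ≤ L τ ρ * ‖x - y‖)
    (X₀ : 𝒳) (tplus : ℝ) (htplus0 : 0 < tplus) (htplusT : tplus < T)
    (X : ℝ → 𝒳) (hXc : ContinuousOn X (Set.Ico 0 tplus))
    (hX : ∀ t ∈ Set.Ico (0:ℝ) tplus,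
      X t = U t 0 X₀ + ∫ s in (0:ℝ)..t, U t s (F s (X s)))
    (hnoext : ¬ ∃ (σ : ℝ) (Z : ℝ → 𝒳), tplus ≤ σ ∧ σ ≤ T ∧
      ContinuousOn Z (Set.Icc 0 σ) ∧
      (∀ t ∈ Set.Icc (0:ℝ) σ,
        Z t = U t 0 X₀ + ∫ s in (0:ℝ)..t, U t s (F s (Z s))) ∧
      ∀ t ∈ Set.Ico (0:ℝ) tplus, Z t = X t) :
    Tendsto (fun t => ‖X t‖) (nhdsWithin tplus (Set.Iio tplus)) atTop := by
  by_contra hblow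
  rw [tendsto_atTop] at hblow
  push_neg at hblow
  obtain ⟨C, hC⟩ := hblow
  replace hC : ∃ᶠ x in nhdsWithin tplus (Set.Iio tplus), ¬ C ≤ ‖X x‖ :=
    hC.mono fun x hx => not_le.mpr hx
  -- constants
  set M₁ := max M₀ 1 with hM₁def
  have hM₁1 : (1:ℝ) ≤ M₁ := le_max_right _ _
  have hM₁0 : (0:ℝ) ≤ M₁ := by linarith
  have hM₁le : ∀ s t : ℝ, 0 ≤ s → s ≤ t → t ≤ T → ‖U t s‖ ≤ M₁ :=
    fun s t hs hst htT => (hM₀ s t hs hst htT).trans (le_max_left _ _)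
  set C₁ := max C 1 with hC₁def
  have hC₁1 : (1:ℝ) ≤ C₁ := le_max_right _ _
  have hC₁pos : (0:ℝ) < C₁ := by linarith
  set ρ := 2 * M₁ * (C₁ + 1) with hρdef
  have hρpos : 0 < ρ := by nlinarith
  set L' := L T ρ with hL'def
  have hL'0 : 0 ≤ L' := hL0 T ρ hT le_rfl hρpos
  set δ := C₁ / (M₁ * L' * ρ + 1) with hδdef
  have hden : (0:ℝ) < M₁ * L' * ρ + 1 := by
    have := mul_nonneg (mul_nonneg hM₁0 hL'0) hρpos.le
    linarith
  have hδpos : 0 < δ := div_pos hC₁pos hden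
  have hδkey : M₁ * L' * ρ * δ ≤ C₁ := by
    have h1 : M₁ * L' * ρ * δ ≤ (M₁ * L' * ρ + 1) * δ :=
      mul_le_mul_of_nonneg_right (by linarith) hδpos.le
    have h2 : (M₁ * L' * ρ + 1) * δ = C₁ := by
      rw [hδdef, mul_comm, div_mul_cancel₀ _ (ne_of_gt hden)]
    linarith
  set δ' := min δ tplus with hδ'def
  have hδ'pos : 0 < δ' := lt_min hδpos htplus0
  have hδ'δ : δ' ≤ δ := min_le_left _ _
  have hδ'tp : δ' ≤ tplus := min_le_right _ _
  -- find t₀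
  have hev : ∀ᶠ t in nhdsWithin tplus (Set.Iio tplus), t ∈ Set.Ioo (tplus - δ') tplus := by
    have h1 : Set.Ioi (tplus - δ') ∈ nhds tplus := Ioi_mem_nhds (by linarith)
    have h2 := Filter.inter_mem (mem_nhdsWithin_of_mem_nhds h1)
      (self_mem_nhdsWithin (a := tplus) (s := Set.Iio tplus))
    filter_upwards [h2] with t ht
    exact ⟨ht.1, ht.2⟩
  obtain ⟨t₀, ht₀C', ht₀mem⟩ := (hC.and_eventually hev).exists
  have ht₀C : ‖X t₀‖ < C₁ := lt_of_lt_of_le (not_le.mp ht₀C') (le_max_left _ _)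
  have ht₀0 : 0 ≤ t₀ := by
    have := ht₀mem.1; linarith
  have ht₀lt : t₀ < tplus := ht₀mem.2
  have ht₀gt : tplus - δ' < t₀ := ht₀mem.1
  -- continuity of the integrand
  have hgcont : ContinuousOn (fun s => F s (X s)) (Set.Ico 0 tplus) := by
    have hmap : ∀ s ∈ Set.Ico (0:ℝ) tplus,
        ((s, X s) : ℝ × 𝒳) ∈ Set.Icc (0:ℝ) T ×ˢ (Set.univ : Set 𝒳) :=
      fun s hs => ⟨⟨hs.1, (hs.2.trans htplusT).le⟩, trivial⟩
    exact hF.comp (continuousOn_id.prodMk hXc) hmap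
  have hcont_t : ∀ t : ℝ, 0 ≤ t → t < tplus →
      ContinuousOn (fun s => U t s (F s (X s))) (Set.Icc 0 t) := by
    intro t ht0 htp
    exact aux_contU T U hUcont M₁ hM₁le t (htp.trans htplusT).le _ _ le_rfl
      (hgcont.mono (fun s hs => ⟨hs.1, lt_of_le_of_lt hs.2 htp⟩))
  -- boundedness on [t₀, tplus)
  have hbound : ∀ s ∈ Set.Ico t₀ tplus, ‖X s‖ ≤ ρ := by
    by_contra hcon
    push_neg at hcon
    obtain ⟨b, hbmem, hb⟩ := hcon
    set A : Set ℝ := {t | t ∈ Set.Ico t₀ tplus ∧ ρ < ‖X t‖} with hAdef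
    have hAne : A.Nonempty := ⟨b, hbmem, hb⟩
    have hAbdd : BddBelow A := ⟨t₀, fun a ha => ha.1.1⟩
    set t₁ := sInf A with ht₁def
    have ht₁0 : t₀ ≤ t₁ := le_csInf hAne (fun a ha => ha.1.1)
    obtain ⟨a, haA⟩ := id hAne
    have ht₁lt : t₁ < tplus := lt_of_le_of_lt (csInf_le hAbdd haA) haA.1.2
    have ht₁Ico : t₁ ∈ Set.Ico (0:ℝ) tplus := ⟨le_trans ht₀0 ht₁0, ht₁lt⟩
    have hlt_t₁ : ∀ s ∈ Set.Ico t₀ t₁, ‖X s‖ ≤ ρ := by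
      intro s hs
      by_contra h
      push_neg at h
      have hsA : s ∈ A := ⟨⟨hs.1, lt_trans hs.2 ht₁lt⟩, h⟩
      exact absurd (csInf_le hAbdd hsA) (not_le.mpr hs.2)
    have ht₁cl : t₁ ∈ closure A := csInf_mem_closure hAne hAbdd
    have hXt₁ : ContinuousWithinAt X A t₁ :=
      (hXc t₁ ht₁Ico).mono (fun a ha => ⟨le_trans ht₀0 ha.1.1, ha.1.2⟩)
    have hnb : (nhdsWithin t₁ A).NeBot := mem_closure_iff_nhdsWithin_neBot.mp ht₁cl
    have hρle : ρ ≤ ‖X t₁‖ := by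
      apply ge_of_tendsto hXt₁.norm
      filter_upwards [eventually_mem_nhdsWithin] with s hs
      exact le_of_lt hs.2
    have ht₀t₁ : t₀ < t₁ := by
      rcases eq_or_lt_of_le ht₁0 with h | h
      · exfalso
        rw [← h] at hρle
        have hcρ : C₁ < ρ := by nlinarith
        linarith
      · exact h
    have hle_t₁ : ‖X t₁‖ ≤ ρ := by
      have hcl2 : t₁ ∈ closure (Set.Ico t₀ t₁) := by
        rw [closure_Ico (ne_of_lt ht₀t₁)]
        exact ⟨ht₀t₁.le, le_rfl⟩
      have hnb2 : (nhdsWithin t₁ (Set.Ico t₀ t₁)).NeBot :=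
        mem_closure_iff_nhdsWithin_neBot.mp hcl2
      have hXt₁' : ContinuousWithinAt X (Set.Ico t₀ t₁) t₁ :=
        (hXc t₁ ht₁Ico).mono (fun s hs => ⟨le_trans ht₀0 hs.1, lt_trans hs.2 ht₁lt⟩)
      apply le_of_tendsto hXt₁'.norm
      filter_upwards [eventually_mem_nhdsWithin] with s hs
      exact hlt_t₁ s hs
    have hbnds : ∀ s ∈ Set.Icc t₀ t₁, ‖X s‖ ≤ ρ := by
      intro s hs
      rcases eq_or_lt_of_le hs.2 with h | h
      · rw [h]; exact hle_t₁
      · exact hlt_t₁ s ⟨hs.1, h⟩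
    have ht₁T : t₁ ≤ T := (lt_trans ht₁lt htplusT).le
    -- shifted equation at t₁
    have hc1 : ContinuousOn (fun s => U t₁ s (F s (X s))) (Set.Icc 0 t₁) :=
      hcont_t t₁ ht₁Ico.1 ht₁lt
    have hi1 : IntervalIntegrable (fun s => U t₁ s (F s (X s))) volume 0 t₀ := by
      apply ContinuousOn.intervalIntegrable
      apply hc1.mono
      rw [Set.uIcc_of_le ht₀0]
      exact Set.Icc_subset_Icc le_rfl ht₁0
    have hi2 : IntervalIntegrable (fun s => U t₁ s (F s (X s))) volume t₀ t₁ := by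
      apply ContinuousOn.intervalIntegrable
      apply hc1.mono
      rw [Set.uIcc_of_le ht₀t₁.le]
      exact Set.Icc_subset_Icc ht₀0 le_rfl
    have hi0 : IntervalIntegrable (fun s => U t₀ s (F s (X s))) volume 0 t₀ := by
      apply ContinuousOn.intervalIntegrable
      rw [Set.uIcc_of_le ht₀0]
      exact hcont_t t₀ ht₀0 ht₀lt
    have hXt : X t₁ = U t₁ 0 X₀ + ∫ s in (0:ℝ)..t₁, U t₁ s (F s (X s)) := hX t₁ ht₁Ico
    have hXt0 : X t₀ = U t₀ 0 X₀ + ∫ s in (0:ℝ)..t₀, U t₀ s (F s (X s)) :=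
      hX t₀ ⟨ht₀0, ht₀lt⟩
    have hcomp_appl : U t₁ t₀ (U t₀ 0 X₀) = U t₁ 0 X₀ := by
      rw [← hUcomp 0 t₀ t₁ le_rfl ht₀0 ht₀t₁.le ht₁T]
      rfl
    have e1 : U t₁ t₀ (X t₀) = U t₁ 0 X₀ + ∫ s in (0:ℝ)..t₀, U t₁ s (F s (X s)) := by
      rw [hXt0, map_add, hcomp_appl]
      congr 1
      rw [← ContinuousLinearMap.intervalIntegral_comp_comm _ hi0]
      apply intervalIntegral.integral_congr
      intro s hs
      rw [Set.uIcc_of_le ht₀0] at hs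
      have := hUcomp s t₀ t₁ hs.1 hs.2 ht₀t₁.le ht₁T
      calc (U t₁ t₀) ((U t₀ s) (F s (X s))) = ((U t₁ t₀).comp (U t₀ s)) (F s (X s)) := rfl
        _ = (U t₁ s) (F s (X s)) := by rw [this]
    have e2 : (∫ s in (0:ℝ)..t₀, U t₁ s (F s (X s)))
        + ∫ s in t₀..t₁, U t₁ s (F s (X s)) = ∫ s in (0:ℝ)..t₁, U t₁ s (F s (X s)) :=
      intervalIntegral.integral_add_adjacent_intervals hi1 hi2
    have hsh : X t₁ = U t₁ t₀ (X t₀) + ∫ s in t₀..t₁, U t₁ s (F s (X s)) := by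
      rw [hXt, e1, add_assoc, e2]
    -- estimate
    have hInorm : ‖∫ s in t₀..t₁, U t₁ s (F s (X s))‖ ≤ M₁ * (L' * ρ) * |t₁ - t₀| := by
      apply intervalIntegral.norm_integral_le_of_norm_le_const
      intro s hs
      rw [Set.uIoc_of_le ht₀t₁.le] at hs
      have hs0 : (0:ℝ) ≤ s := ht₀0.trans hs.1.le
      have hsT : s ∈ Set.Icc (0:ℝ) T := ⟨hs0, hs.2.trans ht₁T⟩
      have hFs : ‖F s (X s)‖ ≤ L' * ρ := by
        have hlip := hLip T ρ hT le_rfl hρpos s hsT (X s) 0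
          (hbnds s ⟨hs.1.le, hs.2⟩) (by simp [hρpos.le])
        rw [sub_zero, hF0 s hsT, sub_zero] at hlip
        calc ‖F s (X s)‖ ≤ L' * ‖X s‖ := hlip
          _ ≤ L' * ρ := mul_le_mul_of_nonneg_left (hbnds s ⟨hs.1.le, hs.2⟩) hL'0
      calc ‖U t₁ s (F s (X s))‖ ≤ ‖U t₁ s‖ * ‖F s (X s)‖ := (U t₁ s).le_opNorm _
        _ ≤ M₁ * (L' * ρ) :=
          mul_le_mul (hM₁le s t₁ hs0 hs.2 ht₁T) hFs (norm_nonneg _) hM₁0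
    have habs : |t₁ - t₀| ≤ δ := by
      rw [abs_of_nonneg (by linarith)]
      have : t₁ - t₀ < δ' := by linarith
      linarith
    have hUXt₀ : ‖U t₁ t₀ (X t₀)‖ ≤ M₁ * C₁ := by
      calc ‖U t₁ t₀ (X t₀)‖ ≤ ‖U t₁ t₀‖ * ‖X t₀‖ := (U t₁ t₀).le_opNorm _
        _ ≤ M₁ * C₁ := mul_le_mul (hM₁le t₀ t₁ ht₀0 ht₀t₁.le ht₁T) ht₀C.le
            (norm_nonneg _) hM₁0
    have hest : ‖X t₁‖ ≤ M₁ * C₁ + C₁ := by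
      rw [hsh]
      have h1 := norm_add_le (U t₁ t₀ (X t₀)) (∫ s in t₀..t₁, U t₁ s (F s (X s)))
      have h2 : M₁ * (L' * ρ) * |t₁ - t₀| ≤ M₁ * L' * ρ * δ := by
        rw [← mul_assoc]
        exact mul_le_mul_of_nonneg_left habs (by positivity)
      linarith
    nlinarith
  -- global bound
  obtain ⟨B₀, hB₀⟩ : ∃ B₀, ∀ s ∈ Set.Icc (0:ℝ) t₀, ‖X s‖ ≤ B₀ := by
    have hc : ContinuousOn X (Set.Icc 0 t₀) :=
      hXc.mono (fun s hs => ⟨hs.1, lt_of_le_of_lt hs.2 ht₀lt⟩)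
    exact (isCompact_Icc).exists_bound_of_continuousOn hc
  set B := max (max B₀ ρ) 1 with hBdef
  have hB1 : (1:ℝ) ≤ B := le_max_right _ _
  have hBpos : (0:ℝ) < B := by linarith
  have hXB : ∀ s ∈ Set.Ico (0:ℝ) tplus, ‖X s‖ ≤ B := by
    intro s hs
    rcases le_total s t₀ with h | h
    · exact (hB₀ s ⟨hs.1, h⟩).trans ((le_max_left _ _).trans (le_max_left _ _))
    · exact (hbound s ⟨h, hs.2⟩).trans ((le_max_right _ _).trans (le_max_left _ _))
  set K := L T B * B with hKdef
  have hK0 : 0 ≤ K := mul_nonneg (hL0 T B hT le_rfl hBpos) hBpos.le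
  have hgB : ∀ s ∈ Set.Ico (0:ℝ) tplus, ‖F s (X s)‖ ≤ K := by
    intro s hs
    have hsT : s ∈ Set.Icc (0:ℝ) T := ⟨hs.1, (hs.2.trans htplusT).le⟩
    have := hLip T B hT le_rfl hBpos s hsT (X s) 0 (hXB s hs) (by simp [hBpos.le])
    rw [sub_zero, hF0 s hsT] at this
    calc ‖F s (X s)‖ = ‖F s (X s) - 0‖ := by rw [sub_zero]
      _ ≤ L T B * ‖X s‖ := this
      _ ≤ K := by
          rw [hKdef]
          exact mul_le_mul_of_nonneg_left (hXB s hs) (hL0 T B hT le_rfl hBpos)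
  -- the extension Z
  set Z : ℝ → 𝒳 := fun t => U t 0 X₀ + ∫ s in (0:ℝ)..t, U t s (F s (X s)) with hZdef
  have hZX : ∀ t ∈ Set.Ico (0:ℝ) tplus, Z t = X t := fun t ht => (hX t ht).symm
  have hZmild : ∀ t ∈ Set.Icc (0:ℝ) tplus,
      Z t = U t 0 X₀ + ∫ s in (0:ℝ)..t, U t s (F s (Z s)) := by
    intro t ht
    have hint : (∫ s in (0:ℝ)..t, U t s (F s (Z s)))
        = ∫ s in (0:ℝ)..t, U t s (F s (X s)) := by
      apply intervalIntegral.integral_congr_ae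
      have hne : ∀ᵐ s : ℝ, s ≠ tplus := by
        refine (ae_iff).mpr ?_
        have hset : {a : ℝ | ¬ a ≠ tplus} = {tplus} := by ext x; simp
        rw [hset]
        exact Real.volume_singleton
      filter_upwards [hne] with s hsne hsmem
      rw [Set.uIoc_of_le ht.1] at hsmem
      have hs' : s ∈ Set.Ico (0:ℝ) tplus :=
        ⟨hsmem.1.le, lt_of_le_of_ne (hsmem.2.trans ht.2) hsne⟩
      rw [hZX s hs']
    rw [hint]
  have hUpt : ∀ s : ℝ, 0 ≤ s → s < tplus → ∀ y : 𝒳,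
      Tendsto (fun t => U t s y) (nhdsWithin tplus (Set.Ico 0 tplus))
        (nhds (U tplus s y)) := by
    intro s hs0 hstp y
    have hm : Tendsto (fun t => ((t, s) : ℝ × ℝ)) (nhdsWithin tplus (Set.Ico 0 tplus))
        (nhdsWithin (tplus, s) {p : ℝ × ℝ | 0 ≤ p.2 ∧ p.2 ≤ p.1 ∧ p.1 ≤ T}) := by
      rw [tendsto_nhdsWithin_iff]
      constructor
      · exact ((continuous_id.prodMk continuous_const).tendsto tplus).mono_left
          nhdsWithin_le_nhds
      · have h2 : ∀ᶠ t in nhdsWithin tplus (Set.Ico 0 tplus), t ∈ Set.Ioi s :=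
          mem_nhdsWithin_of_mem_nhds (Ioi_mem_nhds hstp)
        filter_upwards [eventually_mem_nhdsWithin, h2] with t ht1 ht2
        exact ⟨hs0, le_of_lt ht2, (ht1.2.trans htplusT).le⟩
    exact Tendsto.comp (hUcont y (tplus, s) ⟨hs0, hstp.le, htplusT.le⟩) hm
  have hZcont : ContinuousOn Z (Set.Icc 0 tplus) := by
    intro t ht
    rcases eq_or_lt_of_le ht.2 with heq | hlt
    · -- t = tplus
      rw [show ContinuousWithinAt Z (Set.Icc 0 tplus) t
        = ContinuousWithinAt Z (Set.Icc 0 tplus) tplus from by rw [heq]]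
      rw [← continuousWithinAt_diff_self, Set.Icc_sdiff_right]
      set μ := volume.restrict (Set.Ioc (0:ℝ) tplus) with hμdef
      have hμsing : ∀ᵐ s ∂μ, s ≠ tplus := by
        refine (ae_iff).mpr ?_
        have hset : {a : ℝ | ¬ a ≠ tplus} = {tplus} := by ext x; simp
        rw [hset, hμdef, Measure.restrict_apply (measurableSet_singleton _)]
        exact le_antisymm
          ((measure_mono Set.inter_subset_left).trans (le_of_eq Real.volume_singleton))
          zero_le
      have hDCT : Tendsto
          (fun t => ∫ s, (Set.Ioc (0:ℝ) t).indicator (fun s => U t s (F s (X s))) s ∂μ)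
          (nhdsWithin tplus (Set.Ico 0 tplus))
          (nhds (∫ s, U tplus s (F s (X s)) ∂μ)) := by
        apply tendsto_integral_filter_of_dominated_convergence (fun _ => M₁ * K)
        · filter_upwards [eventually_mem_nhdsWithin] with t ht
          rw [aestronglyMeasurable_indicator_iff measurableSet_Ioc]
          have hμr : μ.restrict (Set.Ioc 0 t) = volume.restrict (Set.Ioc 0 t) := by
            rw [hμdef, Measure.restrict_restrict measurableSet_Ioc,
              Set.inter_eq_left.mpr (Set.Ioc_subset_Ioc le_rfl ht.2.le)]
          rw [hμr]
          exact ((hcont_t t ht.1 ht.2).aestronglyMeasurable measurableSet_Icc).mono_measure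
            (Measure.restrict_mono Set.Ioc_subset_Icc_self le_rfl)
        · filter_upwards [eventually_mem_nhdsWithin] with t ht
          filter_upwards [ae_restrict_mem measurableSet_Ioc] with s hs
          by_cases hmem : s ∈ Set.Ioc 0 t
          · rw [Set.indicator_of_mem hmem]
            have hsIco : s ∈ Set.Ico (0:ℝ) tplus := ⟨hmem.1.le, lt_of_le_of_lt hmem.2 ht.2⟩
            calc ‖U t s (F s (X s))‖ ≤ ‖U t s‖ * ‖F s (X s)‖ := (U t s).le_opNorm _
              _ ≤ M₁ * K := mul_le_mul
                  (hM₁le s t hmem.1.le hmem.2 (ht.2.trans htplusT).le)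
                  (hgB s hsIco) (norm_nonneg _) hM₁0
          · rw [Set.indicator_of_notMem hmem, norm_zero]
            positivity
        · have hfin : IntegrableOn (fun _ : ℝ => M₁ * K) (Set.Ioc (0:ℝ) tplus) volume := by
            rw [integrableOn_const_iff]
            right
            rw [Real.volume_Ioc]
            exact ENNReal.ofReal_lt_top
          exact hfin
        · filter_upwards [ae_restrict_mem measurableSet_Ioc, hμsing] with s hs hsne
          have hslt : s < tplus := lt_of_le_of_ne hs.2 hsne
          have hev2 : ∀ᶠ t in nhdsWithin tplus (Set.Ico 0 tplus), s ∈ Set.Ioc (0:ℝ) t := by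
            filter_upwards [mem_nhdsWithin_of_mem_nhds (Ioi_mem_nhds hslt)] with t ht2
            exact ⟨hs.1, le_of_lt ht2⟩
          apply Tendsto.congr' ?_ (hUpt s hs.1.le hslt (F s (X s)))
          filter_upwards [hev2] with t ht2
          exact (Set.indicator_of_mem ht2 (fun s => U t s (F s (X s)))).symm
      have hψeq : (fun t => ∫ s, (Set.Ioc (0:ℝ) t).indicator
            (fun s => U t s (F s (X s))) s ∂μ)
          =ᶠ[nhdsWithin tplus (Set.Ico 0 tplus)]
            (fun t => ∫ s in (0:ℝ)..t, U t s (F s (X s))) := by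
        filter_upwards [eventually_mem_nhdsWithin] with t ht
        rw [intervalIntegral.integral_of_le ht.1, integral_indicator measurableSet_Ioc,
          hμdef, Measure.restrict_restrict measurableSet_Ioc,
          Set.inter_eq_left.mpr (Set.Ioc_subset_Ioc le_rfl ht.2.le)]
      have hφ : Tendsto (fun t => ∫ s in (0:ℝ)..t, U t s (F s (X s)))
          (nhdsWithin tplus (Set.Ico 0 tplus))
          (nhds (∫ s, U tplus s (F s (X s)) ∂μ)) := hDCT.congr' hψeq
      have hTermA := hUpt 0 le_rfl htplus0 X₀
      have hZtp : Z tplus = U tplus 0 X₀ + ∫ s, U tplus s (F s (X s)) ∂μ := by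
        rw [hZdef]
        simp only
        rw [intervalIntegral.integral_of_le htplus0.le, hμdef]
      show Tendsto Z (nhdsWithin tplus (Set.Ico 0 tplus)) (nhds (Z tplus))
      rw [hZtp]
      exact hTermA.add hφ
    · -- t < tplus
      have htI : t ∈ Set.Ico (0:ℝ) tplus := ⟨ht.1, hlt⟩
      have hIco_mem : Set.Ico (0:ℝ) tplus ∈ nhdsWithin t (Set.Icc 0 tplus) := by
        have hIcoeq : Set.Ico (0:ℝ) tplus = Set.Icc 0 tplus ∩ Set.Iio tplus := by
          ext x
          constructor
          · intro hx; exact ⟨⟨hx.1, hx.2.le⟩, hx.2⟩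
          · intro hx; exact ⟨hx.1.1, hx.2⟩
        rw [hIcoeq]
        exact Filter.inter_mem self_mem_nhdsWithin
          (mem_nhdsWithin_of_mem_nhds (Iio_mem_nhds hlt))
      have hXcwa : ContinuousWithinAt X (Set.Icc 0 tplus) t :=
        (hXc t htI).mono_of_mem_nhdsWithin hIco_mem
      apply hXcwa.congr_of_eventuallyEq ?_ (hZX t htI)
      filter_upwards [hIco_mem] with s hs
      exact hZX s hs
  exact hnoext ⟨tplus, Z, le_rfl, htplusT.le, hZcont, hZmild, hZX⟩
end

section
/- Let 𝒳 be a complex Banach space and T > 0. An evolution family on [0,T] is a two-parameter family of bounded linear operators U(t,s) : 𝒳 → 𝒳, defined for 0 ≤ s ≤ t ≤ T, such that U(t,r)U(r,s) = U(t,s) for all 0 ≤ s ≤ r ≤ t ≤ T, U(s,s) = I for all s ∈ [0,T], and (t,s) ↦ U(t,s)x is continuous for every x ∈ 𝒳; set M₀ = sup_{0 ≤ s ≤ t ≤ T} ‖U(t,s)‖ and assume M₀ < ∞. Let F : [0,T] × 𝒳 → 𝒳 be continuous with F(t,0) = 0 for all t, and assume that for every τ ∈ (0,T] and ρ > 0 there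 is L_{τ,ρ} ≥ 0, nondecreasing in both τ and ρ, with ‖F(t,x) − F(t,y)‖ ≤ L_{τ,ρ}‖x − y‖ for all t ∈ [0,τ] and all x, y with ‖x‖ ≤ ρ, ‖y‖ ≤ ρ. Let X₀ ∈ 𝒳 and let X be the maximal mild solution with initial datum X₀, defined on [0,T] or on [0, t⁺(X₀)). Then for every t* ∈ (0, t⁺(X₀)) (with t⁺(X₀) = T in the first case) there exists a radius ρ* = ρ*(X₀, t*) > 0 such that every Y₀ in the closed ball of radius ρ* centered at X₀ admits a mild solution Y on [0, t*], and the map Y₀ ↦ Y from this closed ball to C⁰([0, t*], 𝒳) (with the supremum norm) is Lipschitz continuous. -/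
open MeasureTheory



open MeasureTheory Set

namespace MildAux

variable {𝒳 : Type*} [NormedAddCommGroup 𝒳] [NormedSpace ℂ 𝒳]

/-- Radial retraction onto the closed ball of radius `R`. -/
noncomputable def rad (R : ℝ) (x : 𝒳) : 𝒳 := if ‖x‖ ≤ R then x else (R / ‖x‖) • x

lemma rad_eq_self {R : ℝ} {x : 𝒳} (h : ‖x‖ ≤ R) : rad R x = x := if_pos h

lemma rad_norm_le {R : ℝ} (hR : 0 ≤ R) (x : 𝒳) : ‖rad R x‖ ≤ R := by
  unfold rad
  split_ifs with h
  · exact h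
  · push_neg at h
    have hx : 0 < ‖x‖ := lt_of_le_of_lt hR h
    rw [norm_smul, Real.norm_eq_abs, abs_of_nonneg (div_nonneg hR hx.le), div_mul_cancel₀]
    exact hx.ne'

lemma rad_lip {R : ℝ} (hR : 0 ≤ R) (x y : 𝒳) : ‖rad R x - rad R y‖ ≤ 2 * ‖x - y‖ := by
  have key : ∀ u v : 𝒳, ‖u‖ ≤ R → R < ‖v‖ → ‖rad R u - rad R v‖ ≤ 2 * ‖u - v‖ := by
    intro u v hu hv
    have hv0 : 0 < ‖v‖ := lt_of_le_of_lt hR hv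
    rw [rad_eq_self hu, rad, if_neg (not_le.2 hv)]
    have h1 : ‖v - (R / ‖v‖) • v‖ = ‖v‖ - R := by
      have : v - (R / ‖v‖) • v = (1 - R / ‖v‖) • v := by
        rw [sub_smul, one_smul]
      rw [this, norm_smul, Real.norm_eq_abs, abs_of_nonneg, sub_mul, one_mul,
        div_mul_cancel₀ _ hv0.ne']
      rw [sub_nonneg, div_le_one hv0]
      exact hv.le
    calc ‖u - (R / ‖v‖) • v‖ ≤ ‖u - v‖ + ‖v - (R / ‖v‖) • v‖ := norm_sub_le_norm_sub_add_norm_sub _ _ _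
      _ = ‖u - v‖ + (‖v‖ - R) := by rw [h1]
      _ ≤ ‖u - v‖ + (‖v‖ - ‖u‖) := by linarith
      _ ≤ ‖u - v‖ + ‖v - u‖ := by
          have := norm_sub_norm_le v u
          linarith
      _ = 2 * ‖u - v‖ := by rw [norm_sub_rev v u]; ring
  rcases le_or_gt ‖x‖ R with hx | hx <;> rcases le_or_gt ‖y‖ R with hy | hy
  · rw [rad_eq_self hx, rad_eq_self hy]; nlinarith [norm_nonneg (x - y)]
  · exact key x y hx hy
  · rw [norm_sub_rev, norm_sub_rev x y]; exact key y x hy hx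
  · have hx0 : 0 < ‖x‖ := lt_of_le_of_lt hR hx
    have hy0 : 0 < ‖y‖ := lt_of_le_of_lt hR hy
    rw [rad, if_neg (not_le.2 hx), rad, if_neg (not_le.2 hy)]
    have h2 : (R / ‖x‖) • x - (R / ‖y‖) • y
        = (R / ‖x‖) • (x - y) + (R / ‖x‖ - R / ‖y‖) • y := by
      rw [smul_sub, sub_smul]; abel
    rw [h2]
    have e1 : ‖(R / ‖x‖) • (x - y)‖ ≤ 1 * ‖x - y‖ := by
      rw [norm_smul, Real.norm_eq_abs, abs_of_nonneg (div_nonneg hR hx0.le)]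
      have : R / ‖x‖ ≤ 1 := (div_le_one hx0).2 hx.le
      exact mul_le_mul_of_nonneg_right this (norm_nonneg _)
    have e2 : ‖(R / ‖x‖ - R / ‖y‖) • y‖ ≤ ‖x - y‖ := by
      rw [norm_smul, Real.norm_eq_abs]
      have hd : R / ‖x‖ - R / ‖y‖ = R * (‖y‖ - ‖x‖) / (‖x‖ * ‖y‖) := by
        field_simp
      rw [hd, abs_div, abs_mul, abs_of_nonneg hR, abs_of_nonneg (by positivity : (0:ℝ) ≤ ‖x‖ * ‖y‖)]
      rw [div_mul_eq_mul_div, div_le_iff₀ (by positivity)]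
      have h3 : |‖y‖ - ‖x‖| ≤ ‖x - y‖ := by
        rw [abs_sub_comm]; exact abs_norm_sub_norm_le x y
      calc R * |‖y‖ - ‖x‖| * ‖y‖ ≤ ‖x‖ * (‖x - y‖ * ‖y‖) := by
            rw [mul_assoc]
            apply mul_le_mul hx.le (mul_le_mul_of_nonneg_right h3 (norm_nonneg _))
              (by positivity) (norm_nonneg _)
        _ = ‖x - y‖ * (‖x‖ * ‖y‖) := by ring
    calc ‖(R / ‖x‖) • (x - y) + (R / ‖x‖ - R / ‖y‖) • y‖
        ≤ ‖(R / ‖x‖) • (x - y)‖ + ‖(R / ‖x‖ - R / ‖y‖) • y‖ := norm_add_le _ _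
      _ ≤ 1 * ‖x - y‖ + ‖x - y‖ := add_le_add e1 e2
      _ = 2 * ‖x - y‖ := by ring

lemma rad_continuous {R : ℝ} (hR : 0 ≤ R) : Continuous (rad (𝒳 := 𝒳) R) := by
  have : LipschitzWith 2 (rad (𝒳 := 𝒳) R) := by
    apply LipschitzWith.of_dist_le_mul
    intro x y
    rw [dist_eq_norm, dist_eq_norm]
    simpa using rad_lip hR x y
  exact this.continuous

/-- Grönwall-type inequality in integral form, proved by iterating the inequality. -/
lemma gronwall {a b C tmax : ℝ} (ha : 0 ≤ a) (hb : 0 ≤ b) (φ : ℝ → ℝ)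
    (hφ : ContinuousOn φ (Set.Icc 0 tmax))
    (hC : ∀ t ∈ Set.Icc (0:ℝ) tmax, φ t ≤ C)
    (hineq : ∀ t ∈ Set.Icc (0:ℝ) tmax, φ t ≤ a + b * ∫ s in (0:ℝ)..t, φ s) :
    ∀ t ∈ Set.Icc (0:ℝ) tmax, φ t ≤ a * Real.exp (b * t) := by
  have key : ∀ n : ℕ, ∀ t ∈ Set.Icc (0:ℝ) tmax,
      φ t ≤ a * (∑ k ∈ Finset.range n, b ^ k / k.factorial * t ^ k)
        + C * b ^ n / n.factorial * t ^ n := by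
    intro n
    induction n with
    | zero => intro t ht; simpa using hC t ht
    | succ n ih =>
      intro t ht
      obtain ⟨ht0, htm⟩ := ht
      set ψ : ℝ → ℝ := fun s => a * (∑ k ∈ Finset.range n, b ^ k / k.factorial * s ^ k)
        + C * b ^ n / n.factorial * s ^ n with hψ
      have hψc : Continuous ψ := by fun_prop
      have hφint : IntervalIntegrable φ volume 0 t := by
        apply ContinuousOn.intervalIntegrable
        rw [Set.uIcc_of_le ht0]
        exact hφ.mono (Set.Icc_subset_Icc le_rfl htm)
      have hmono : (∫ s in (0:ℝ)..t, φ s) ≤ ∫ s in (0:ℝ)..t, ψ s := by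
        apply intervalIntegral.integral_mono_on ht0 hφint (hψc.intervalIntegrable 0 t)
        intro s hs
        exact ih s ⟨hs.1, hs.2.trans htm⟩
      have hint : (∫ s in (0:ℝ)..t, ψ s)
          = a * (∑ k ∈ Finset.range n, b ^ k / k.factorial * (t ^ (k+1) / ((k:ℝ)+1)))
            + C * b ^ n / n.factorial * (t ^ (n+1) / ((n:ℝ)+1)) := by
        have h1 : IntervalIntegrable (fun s : ℝ => a * (∑ k ∈ Finset.range n, b ^ k / k.factorial * s ^ k)) volume 0 t :=
          Continuous.intervalIntegrable (by fun_prop) 0 t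
        have h2 : IntervalIntegrable (fun s : ℝ => C * b ^ n / n.factorial * s ^ n) volume 0 t :=
          Continuous.intervalIntegrable (by fun_prop) 0 t
        rw [hψ]
        rw [intervalIntegral.integral_add h1 h2, intervalIntegral.integral_const_mul,
          intervalIntegral.integral_const_mul,
          intervalIntegral.integral_finset_sum (fun k _ =>
            Continuous.intervalIntegrable (by fun_prop) 0 t)]
        congr 1
        · congr 1
          apply Finset.sum_congr rfl
          intro k _
          rw [intervalIntegral.integral_const_mul, integral_pow,
            zero_pow (Nat.succ_ne_zero k)]
          push_cast
          ring
        · rw [integral_pow, zero_pow (Nat.succ_ne_zero n)]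
          push_cast
          ring
      have step := hineq t ⟨ht0, htm⟩
      have hkey : φ t ≤ a + b * (∫ s in (0:ℝ)..t, ψ s) :=
        step.trans (by nlinarith [hmono])
      rw [hint] at hkey
      refine hkey.trans (le_of_eq ?_)
      rw [Finset.sum_range_succ' (fun k => b ^ k / (k.factorial : ℝ) * t ^ k) n]
      have hsum : (∑ k ∈ Finset.range n, b ^ (k+1) / ((k+1).factorial : ℝ) * t ^ (k+1))
          = b * ∑ k ∈ Finset.range n, b ^ k / (k.factorial:ℝ) * (t^(k+1)/((k:ℝ)+1)) := by
        rw [Finset.mul_sum]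
        apply Finset.sum_congr rfl
        intro k _
        have hk : ((k.factorial:ℝ)) ≠ 0 := Nat.cast_ne_zero.2 k.factorial_ne_zero
        have hk1 : ((k:ℝ) + 1) ≠ 0 := by positivity
        push_cast [Nat.factorial_succ]
        field_simp
        ring
      have hrem : C * b ^ (n+1) / ((n+1).factorial:ℝ) * t^(n+1)
          = b * (C * b ^ n / (n.factorial:ℝ) * (t^(n+1)/((n:ℝ)+1))) := by
        have hn : ((n.factorial:ℝ)) ≠ 0 := Nat.cast_ne_zero.2 n.factorial_ne_zero
        have hn1 : ((n:ℝ) + 1) ≠ 0 := by positivity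
        push_cast [Nat.factorial_succ]
        field_simp
        ring
      rw [hsum, hrem]
      simp only [pow_zero, Nat.factorial_zero, Nat.cast_one, div_one, mul_one]
      ring
  intro t ht
  have htend : Filter.Tendsto
      (fun n : ℕ => a * Real.exp (b * t) + C * ((b*t) ^ n / n.factorial))
      Filter.atTop (nhds (a * Real.exp (b * t))) := by
    have h0 := (FloorSemiring.tendsto_pow_div_factorial_atTop (K := ℝ) (b * t)).const_mul C
    have := Filter.Tendsto.const_add (a * Real.exp (b * t)) h0
    simpa using this
  apply ge_of_tendsto' htend
  intro n
  have h1 := key n t ht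
  have h2 : a * (∑ k ∈ Finset.range n, b ^ k / k.factorial * t ^ k) ≤ a * Real.exp (b * t) := by
    apply mul_le_mul_of_nonneg_left _ ha
    have := Real.sum_le_exp_of_nonneg (mul_nonneg hb ht.1) n
    refine le_trans (le_of_eq ?_) this
    apply Finset.sum_congr rfl
    intro k _
    rw [mul_pow]
    ring
  have h3 : C * b ^ n / n.factorial * t ^ n = C * ((b*t) ^ n / n.factorial) := by
    rw [mul_pow]; ring
  linarith [h1, h2]

/-- The triangle `0 ≤ s ≤ t ≤ T`. -/
def tri (T : ℝ) : Set (ℝ × ℝ) := {p : ℝ × ℝ | 0 ≤ p.2 ∧ p.2 ≤ p.1 ∧ p.1 ≤ T}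

lemma Ucont_joint {T : ℝ} (U : ℝ → ℝ → 𝒳 →L[ℂ] 𝒳)
    (hUcont : ∀ x : 𝒳, ContinuousOn (fun p : ℝ × ℝ => U p.1 p.2 x) (tri T))
    (M : ℝ) (hM : ∀ p ∈ tri T, ‖U p.1 p.2‖ ≤ M) :
    ContinuousOn (fun q : (ℝ × ℝ) × 𝒳 => U q.1.1 q.1.2 q.2) (tri T ×ˢ Set.univ) := by
  rintro ⟨p₀, x₀⟩ hq₀
  have hp₀ : p₀ ∈ tri T := hq₀.1
  have h1 : Filter.Tendsto (fun q : (ℝ × ℝ) × 𝒳 => U q.1.1 q.1.2 (q.2 - x₀))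
      (nhdsWithin (p₀, x₀) (tri T ×ˢ Set.univ)) (nhds 0) := by
    apply squeeze_zero_norm'
    · filter_upwards [self_mem_nhdsWithin] with q hq
      calc ‖U q.1.1 q.1.2 (q.2 - x₀)‖ ≤ ‖U q.1.1 q.1.2‖ * ‖q.2 - x₀‖ :=
            ContinuousLinearMap.le_opNorm _ _
        _ ≤ (max M 0) * ‖q.2 - x₀‖ :=
            mul_le_mul_of_nonneg_right ((hM _ hq.1).trans (le_max_left _ _)) (norm_nonneg _)
    · have hc : Continuous (fun q : (ℝ × ℝ) × 𝒳 => max M 0 * ‖q.2 - x₀‖) := by fun_prop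
      have h0 := hc.tendsto (p₀, x₀)
      simp only [sub_self, norm_zero, mul_zero] at h0
      exact h0.mono_left nhdsWithin_le_nhds
  have h2 : Filter.Tendsto (fun q : (ℝ × ℝ) × 𝒳 => U q.1.1 q.1.2 x₀)
      (nhdsWithin (p₀, x₀) (tri T ×ˢ Set.univ)) (nhds (U p₀.1 p₀.2 x₀)) := by
    have hcomp : ContinuousWithinAt ((fun p : ℝ × ℝ => U p.1 p.2 x₀) ∘ Prod.fst)
        (tri T ×ˢ Set.univ) (p₀, x₀) :=
      (hUcont x₀ p₀ hp₀).comp continuousWithinAt_fst (fun q hq => hq.1)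
    exact hcomp
  have h3 := h1.add h2
  rw [zero_add] at h3
  refine Filter.Tendsto.congr (fun q => ?_) h3
  simp [map_sub]

lemma cont_gmax {T : ℝ} (U : ℝ → ℝ → 𝒳 →L[ℂ] 𝒳)
    (hUj : ContinuousOn (fun q : (ℝ × ℝ) × 𝒳 => U q.1.1 q.1.2 q.2) (tri T ×ˢ Set.univ))
    {τ : ℝ} (hτT : τ ≤ T)
    (w : ℝ → 𝒳) (hw : ContinuousOn w (Set.Icc 0 τ)) (t : ℝ) (ht : t ∈ Set.Icc 0 τ) :
    ContinuousOn (fun s => U (max t s) s (w s)) (Set.Icc 0 τ) := by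
  have : ContinuousOn ((fun q : (ℝ × ℝ) × 𝒳 => U q.1.1 q.1.2 q.2) ∘
      (fun s : ℝ => (((max t s, s) : ℝ × ℝ), w s))) (Set.Icc 0 τ) := by
    apply hUj.comp
    · exact ContinuousOn.prodMk
        (Continuous.continuousOn (by fun_prop)) hw
    · intro s hs
      exact ⟨⟨hs.1, le_max_right _ _, max_le (ht.2.trans hτT) (hs.2.trans hτT)⟩, trivial⟩
  exact this

lemma cont_param_integral {T : ℝ} (U : ℝ → ℝ → 𝒳 →L[ℂ] 𝒳)
    (hUj : ContinuousOn (fun q : (ℝ × ℝ) × 𝒳 => U q.1.1 q.1.2 q.2) (tri T ×ˢ Set.univ))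
    (M : ℝ) (hM : ∀ p ∈ tri T, ‖U p.1 p.2‖ ≤ M)
    {τ : ℝ} (hτ0 : 0 ≤ τ) (hτT : τ ≤ T)
    (w : ℝ → 𝒳) (hw : ContinuousOn w (Set.Icc 0 τ)) :
    ContinuousOn (fun t => ∫ s in (0:ℝ)..t, U (max t s) s (w s)) (Set.Icc 0 τ) := by
  obtain ⟨C, hC⟩ := isCompact_Icc.exists_bound_of_continuousOn hw
  set C' := max C 0 with hC'def
  have hC'0 : (0:ℝ) ≤ C' := le_max_right _ _
  have hwC : ∀ s ∈ Set.Icc (0:ℝ) τ, ‖w s‖ ≤ C' := fun s hs => (hC s hs).trans (le_max_left _ _)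
  set M' := max M 0 with hM'def
  have hM'0 : (0:ℝ) ≤ M' := le_max_right _ _
  have hMC : ∀ p ∈ tri T, ‖U p.1 p.2‖ ≤ M' := fun p hp => (hM p hp).trans (le_max_left _ _)
  set g : ℝ → ℝ → 𝒳 := fun t s => U (max t s) s (w s) with hgdef
  have htri : ∀ t ∈ Set.Icc (0:ℝ) τ, ∀ s ∈ Set.Icc (0:ℝ) τ, (max t s, s) ∈ tri T :=
    fun t ht s hs => ⟨hs.1, le_max_right _ _, max_le (ht.2.trans hτT) (hs.2.trans hτT)⟩
  have hgj : ContinuousOn (fun p : ℝ × ℝ => g p.1 p.2) (Set.Icc 0 τ ×ˢ Set.Icc 0 τ) := by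
    have hmap : ∀ p ∈ (Set.Icc (0:ℝ) τ ×ˢ Set.Icc (0:ℝ) τ),
        (((max p.1 p.2, p.2), w p.2) : (ℝ × ℝ) × 𝒳) ∈ tri T ×ˢ (Set.univ : Set 𝒳) := by
      rintro ⟨t, s⟩ ⟨ht, hs⟩
      exact ⟨htri t ht s hs, trivial⟩
    apply hUj.comp ?_ hmap
    apply ContinuousOn.prodMk
    · exact Continuous.continuousOn (by fun_prop)
    · exact hw.comp continuous_snd.continuousOn (fun p hp => hp.2)
  have hgs : ∀ t ∈ Set.Icc (0:ℝ) τ, ContinuousOn (fun s => g t s) (Set.Icc 0 τ) := by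
    intro t ht
    have : ContinuousOn ((fun p : ℝ × ℝ => g p.1 p.2) ∘ (fun s : ℝ => ((t, s) : ℝ × ℝ)))
        (Set.Icc 0 τ) :=
      hgj.comp ((continuous_const.prodMk continuous_id).continuousOn) (fun s hs => ⟨ht, hs⟩)
    exact this
  have hgt : ∀ s ∈ Set.Icc (0:ℝ) τ, ContinuousOn (fun t => g t s) (Set.Icc 0 τ) := by
    intro s hs
    have : ContinuousOn ((fun p : ℝ × ℝ => g p.1 p.2) ∘ (fun t : ℝ => ((t, s) : ℝ × ℝ)))
        (Set.Icc 0 τ) :=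
      hgj.comp ((continuous_id.prodMk continuous_const).continuousOn) (fun t ht => ⟨ht, hs⟩)
    exact this
  have hgbd : ∀ t ∈ Set.Icc (0:ℝ) τ, ∀ s ∈ Set.Icc (0:ℝ) τ, ‖g t s‖ ≤ M' * C' := by
    intro t ht s hs
    calc ‖U (max t s) s (w s)‖ ≤ ‖U (max t s) s‖ * ‖w s‖ := ContinuousLinearMap.le_opNorm _ _
      _ ≤ M' * C' := mul_le_mul (hMC _ (htri t ht s hs)) (hwC s hs) (norm_nonneg _) hM'0
  have hsub : ∀ a b : ℝ, a ∈ Set.Icc (0:ℝ) τ → b ∈ Set.Icc (0:ℝ) τ →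
      Set.uIcc a b ⊆ Set.Icc 0 τ := by
    intro a b ha hb
    rw [← Set.uIcc_of_le hτ0]
    exact Set.uIcc_subset_uIcc (by rwa [Set.uIcc_of_le hτ0]) (by rwa [Set.uIcc_of_le hτ0])
  have hgint : ∀ t ∈ Set.Icc (0:ℝ) τ, ∀ a b : ℝ, a ∈ Set.Icc (0:ℝ) τ → b ∈ Set.Icc (0:ℝ) τ →
      IntervalIntegrable (g t) volume a b := by
    intro t ht a b ha hb
    exact ((hgs t ht).mono (hsub a b ha hb)).intervalIntegrable
  intro t₀ ht₀
  have h0mem : (0:ℝ) ∈ Set.Icc (0:ℝ) τ := ⟨le_rfl, hτ0⟩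
  have hsub₀ : Set.uIoc (0:ℝ) t₀ ⊆ Set.Icc (0:ℝ) τ :=
    Set.uIoc_subset_uIcc.trans (hsub 0 t₀ h0mem ht₀)
  have hdecomp : ∀ t ∈ Set.Icc (0:ℝ) τ,
      (∫ s in (0:ℝ)..t, g t s) = (∫ s in (0:ℝ)..t₀, g t s) + ∫ s in t₀..t, g t s := by
    intro t ht
    rw [intervalIntegral.integral_add_adjacent_intervals (hgint t ht 0 t₀ h0mem ht₀)
      (hgint t ht t₀ t ht₀ ht)]
  have hA : Filter.Tendsto (fun t => ∫ s in (0:ℝ)..t₀, g t s)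
      (nhdsWithin t₀ (Set.Icc 0 τ)) (nhds (∫ s in (0:ℝ)..t₀, g t₀ s)) := by
    have hmeas : ∀ᶠ t in nhdsWithin t₀ (Set.Icc 0 τ),
        AEStronglyMeasurable (fun s => g t s) (volume.restrict (Set.uIoc (0:ℝ) t₀)) := by
      filter_upwards [self_mem_nhdsWithin] with t ht
      exact ContinuousOn.aestronglyMeasurable ((hgs t ht).mono hsub₀) measurableSet_uIoc
    have hbd : ∀ᶠ t in nhdsWithin t₀ (Set.Icc 0 τ),
        ∀ᵐ s ∂(volume : Measure ℝ), s ∈ Set.uIoc (0:ℝ) t₀ → ‖g t s‖ ≤ M' * C' := by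
      filter_upwards [self_mem_nhdsWithin] with t ht
      exact Filter.Eventually.of_forall (fun s hs => hgbd t ht s (hsub₀ hs))
    have hlim : ∀ᵐ s ∂(volume : Measure ℝ), s ∈ Set.uIoc (0:ℝ) t₀ →
        Filter.Tendsto (fun t => g t s) (nhdsWithin t₀ (Set.Icc 0 τ)) (nhds (g t₀ s)) :=
      Filter.Eventually.of_forall (fun s hs => (hgt s (hsub₀ hs)) t₀ ht₀)
    exact intervalIntegral.tendsto_integral_filter_of_dominated_convergence
      (fun _ => M' * C') hmeas hbd intervalIntegrable_const hlim
  have hB : Filter.Tendsto (fun t => ∫ s in t₀..t, g t s)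
      (nhdsWithin t₀ (Set.Icc 0 τ)) (nhds 0) := by
    refine squeeze_zero_norm' (a := fun t => M' * C' * |t - t₀|) ?_ ?_
    · filter_upwards [self_mem_nhdsWithin] with t ht
      apply intervalIntegral.norm_integral_le_of_norm_le_const
      intro s hs
      have hs' : s ∈ Set.Icc (0:ℝ) τ :=
        Set.uIoc_subset_uIcc.trans (hsub t₀ t ht₀ ht) hs
      exact hgbd t ht s hs'
    · have hc : Continuous fun t : ℝ => M' * C' * |t - t₀| := by fun_prop
      have h0 := hc.tendsto t₀
      simp only [sub_self, abs_zero, mul_zero] at h0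
      exact h0.mono_left nhdsWithin_le_nhds
  have hAB := hA.add hB
  rw [add_zero] at hAB
  have : Filter.Tendsto (fun t => ∫ s in (0:ℝ)..t, g t s)
      (nhdsWithin t₀ (Set.Icc 0 τ)) (nhds (∫ s in (0:ℝ)..t₀, g t₀ s)) := by
    apply Filter.Tendsto.congr' ?_ hAB
    filter_upwards [self_mem_nhdsWithin] with t ht
    exact (hdecomp t ht).symm
  exact this

end MildAux


set_option maxHeartbeats 4000000 in
open MildAux in
/-- Lipschitz continuous dependence on the initial datum: if `X` is the maximal mild
solution with initial datum `X₀`, defined on `[0,T]` or on `[0, t⁺(X₀))`, then for every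
`t* ∈ (0, t⁺(X₀))` there is a radius `ρ* > 0` such that every initial datum in the
closed ball of radius `ρ*` around `X₀` admits a mild solution on `[0, t*]`, and the
solution map is Lipschitz continuous in the supremum norm. -/
theorem mild_solution_lipschitz_dependence {𝒳 : Type*} [NormedAddCommGroup 𝒳]
    [NormedSpace ℂ 𝒳] [CompleteSpace 𝒳]
    (T : ℝ) (hT : 0 < T)
    (U : ℝ → ℝ → 𝒳 →L[ℂ] 𝒳)
    (hUcomp : ∀ s r t : ℝ, 0 ≤ s → s ≤ r → r ≤ t → t ≤ T →
      (U t r).comp (U r s) = U t s)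
    (hUid : ∀ s : ℝ, 0 ≤ s → s ≤ T → U s s = ContinuousLinearMap.id ℂ 𝒳)
    (hUcont : ∀ x : 𝒳, ContinuousOn (fun p : ℝ × ℝ => U p.1 p.2 x)
      {p : ℝ × ℝ | 0 ≤ p.2 ∧ p.2 ≤ p.1 ∧ p.1 ≤ T})
    (M₀ : ℝ) (hM₀ : ∀ s t : ℝ, 0 ≤ s → s ≤ t → t ≤ T → ‖U t s‖ ≤ M₀)
    (F : ℝ → 𝒳 → 𝒳)
    (hF : ContinuousOn (fun p : ℝ × 𝒳 => F p.1 p.2) (Set.Icc 0 T ×ˢ Set.univ))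
    (hF0 : ∀ t ∈ Set.Icc (0:ℝ) T, F t 0 = 0)
    (L : ℝ → ℝ → ℝ)
    (hL0 : ∀ τ ρ : ℝ, 0 < τ → τ ≤ T → 0 < ρ → 0 ≤ L τ ρ)
    (hLmono : ∀ τ₁ τ₂ ρ₁ ρ₂ : ℝ, 0 < τ₁ → τ₁ ≤ τ₂ → τ₂ ≤ T → 0 < ρ₁ → ρ₁ ≤ ρ₂ →
      L τ₁ ρ₁ ≤ L τ₂ ρ₂)
    (hLip : ∀ τ ρ : ℝ, 0 < τ → τ ≤ T → 0 < ρ → ∀ t ∈ Set.Icc (0:ℝ) τ, ∀ x y : 𝒳,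
      ‖x‖ ≤ ρ → ‖y‖ ≤ ρ → ‖F t x - F t y‖ ≤ L τ ρ * ‖x - y‖)
    (X₀ : 𝒳) (tp : ℝ) (htp0 : 0 < tp) (htpT : tp ≤ T)
    (I : Set ℝ) (hI : (I = Set.Icc 0 T ∧ tp = T) ∨ I = Set.Ico 0 tp)
    (X : ℝ → 𝒳) (hXc : ContinuousOn X I)
    (hX : ∀ t ∈ I, X t = U t 0 X₀ + ∫ s in (0:ℝ)..t, U t s (F s (X s))) :
    ∀ tstar : ℝ, 0 < tstar → tstar < tp →
      ∃ ρstar : ℝ, 0 < ρstar ∧ ∃ K : ℝ, 0 ≤ K ∧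
        (∀ Y₀ ∈ Metric.closedBall X₀ ρstar,
          ∃ Y : ℝ → 𝒳, ContinuousOn Y (Set.Icc 0 tstar) ∧
            ∀ t ∈ Set.Icc (0:ℝ) tstar,
              Y t = U t 0 Y₀ + ∫ s in (0:ℝ)..t, U t s (F s (Y s))) ∧
        ∀ Y₀ Z₀ : 𝒳, Y₀ ∈ Metric.closedBall X₀ ρstar → Z₀ ∈ Metric.closedBall X₀ ρstar →
          ∀ Y Z : ℝ → 𝒳,
            ContinuousOn Y (Set.Icc 0 tstar) →
            (∀ t ∈ Set.Icc (0:ℝ) tstar,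
              Y t = U t 0 Y₀ + ∫ s in (0:ℝ)..t, U t s (F s (Y s))) →
            ContinuousOn Z (Set.Icc 0 tstar) →
            (∀ t ∈ Set.Icc (0:ℝ) tstar,
              Z t = U t 0 Z₀ + ∫ s in (0:ℝ)..t, U t s (F s (Z s))) →
            ∀ t ∈ Set.Icc (0:ℝ) tstar, ‖Y t - Z t‖ ≤ K * ‖Y₀ - Z₀‖ := by
  intro tstar hts0 htstp
  have htsT : tstar ≤ T := le_trans htstp.le htpT
  have htsI : Set.Icc 0 tstar ⊆ I := by
    rcases hI with ⟨hI1, _⟩ | hI1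
    · rw [hI1]; exact Set.Icc_subset_Icc le_rfl htsT
    · rw [hI1]; exact fun s hs => ⟨hs.1, lt_of_le_of_lt hs.2 htstp⟩
  have hXc' : ContinuousOn X (Set.Icc 0 tstar) := hXc.mono htsI
  have hXeq : ∀ t ∈ Set.Icc (0:ℝ) tstar,
      X t = U t 0 X₀ + ∫ s in (0:ℝ)..t, U t s (F s (X s)) := fun t ht => hX t (htsI ht)
  obtain ⟨R₀, hR₀⟩ := isCompact_Icc.exists_bound_of_continuousOn hXc'
  set R : ℝ := max R₀ 0 + 1 with hRdef
  have hR1 : (1:ℝ) ≤ R := le_add_of_nonneg_left (le_max_right _ _)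
  have hR0 : (0:ℝ) < R := lt_of_lt_of_le one_pos hR1
  have hXR : ∀ s ∈ Set.Icc (0:ℝ) tstar, ‖X s‖ ≤ R - 1 := by
    intro s hs
    have := (hR₀ s hs).trans (le_max_left R₀ 0)
    rw [hRdef]; linarith
  set M : ℝ := max M₀ 1 with hMdef
  have hM1 : (1:ℝ) ≤ M := le_max_right _ _
  have hM0 : (0:ℝ) ≤ M := zero_le_one.trans hM1
  have hMb : ∀ p ∈ tri T, ‖U p.1 p.2‖ ≤ M :=
    fun p hp => (hM₀ p.2 p.1 hp.1 hp.2.1 hp.2.2).trans (le_max_left _ _)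
  have hUcont' : ∀ x : 𝒳, ContinuousOn (fun p : ℝ × ℝ => U p.1 p.2 x) (tri T) := hUcont
  have hUj := Ucont_joint U hUcont' M hMb
  set L' : ℝ := max (L tstar R) 0 with hL'def
  have hL'0 : (0:ℝ) ≤ L' := le_max_right _ _
  have hFlip : ∀ t ∈ Set.Icc (0:ℝ) tstar, ∀ x y : 𝒳, ‖x‖ ≤ R → ‖y‖ ≤ R →
      ‖F t x - F t y‖ ≤ L' * ‖x - y‖ := by
    intro t ht x y hx hy
    exact (hLip tstar R hts0 htsT hR0 t ht x y hx hy).trans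
      (mul_le_mul_of_nonneg_right (le_max_left _ _) (norm_nonneg _))
  set K : ℝ := M * Real.exp (2 * M * L' * tstar) with hKdef
  have hexp1 : (1:ℝ) ≤ Real.exp (2 * M * L' * tstar) :=
    Real.one_le_exp (by positivity)
  have hK1 : (1:ℝ) ≤ K := by nlinarith
  have hK0 : (0:ℝ) < K := lt_of_lt_of_le one_pos hK1
  set ρ : ℝ := 1 / (2 * K) with hρdef
  have hρ0 : (0:ℝ) < ρ := by positivity
  have hρK : K * ρ = 1/2 := by rw [hρdef]; field_simp
  have hρ1 : ρ ≤ 1 := by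
    rw [hρdef]
    rw [div_le_one (by positivity)]
    linarith
  -- continuity helpers
  have hUapply : ∀ t : ℝ, t ∈ Set.Icc 0 T → ∀ w : ℝ → 𝒳, ContinuousOn w (Set.Icc 0 t) →
      ContinuousOn (fun s => U t s (w s)) (Set.Icc 0 t) := by
    intro t ht w hw
    have : ContinuousOn ((fun q : (ℝ × ℝ) × 𝒳 => U q.1.1 q.1.2 q.2) ∘
        (fun s : ℝ => (((t, s) : ℝ × ℝ), w s))) (Set.Icc 0 t) := by
      apply hUj.comp
      · exact ContinuousOn.prodMk (Continuous.continuousOn (by fun_prop)) hw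
      · intro s hs
        exact ⟨⟨hs.1, hs.2, ht.2⟩, trivial⟩
    exact this
  have hIntInt : ∀ t ∈ Set.Icc (0:ℝ) tstar, ∀ w : ℝ → 𝒳, ContinuousOn w (Set.Icc 0 t) →
      IntervalIntegrable (fun s => U t s (w s)) volume 0 t := by
    intro t ht w hw
    apply ContinuousOn.intervalIntegrable
    rw [Set.uIcc_of_le ht.1]
    exact hUapply t ⟨ht.1, ht.2.trans htsT⟩ w hw
  have hFcomp : ∀ Y : ℝ → 𝒳, ContinuousOn Y (Set.Icc 0 tstar) →
      ContinuousOn (fun s => F s (Y s)) (Set.Icc 0 tstar) := by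
    intro Y hYc
    have : ContinuousOn ((fun p : ℝ × 𝒳 => F p.1 p.2) ∘ (fun s : ℝ => ((s, Y s) : ℝ × 𝒳)))
        (Set.Icc 0 tstar) :=
      hF.comp (ContinuousOn.prodMk continuousOn_id hYc)
        (fun s hs => ⟨⟨hs.1, hs.2.trans htsT⟩, trivial⟩)
    exact this
  -- the central Grönwall estimate
  have main_est : ∀ b : ℝ, 0 ≤ b → ∀ c : ℝ, c ∈ Set.Icc (0:ℝ) tstar →
      ∀ (Y Z : ℝ → 𝒳) (Y₀ Z₀ : 𝒳) (GY GZ : ℝ → 𝒳),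
      ContinuousOn GY (Set.Icc 0 c) → ContinuousOn GZ (Set.Icc 0 c) →
      ContinuousOn Y (Set.Icc 0 c) → ContinuousOn Z (Set.Icc 0 c) →
      (∀ t ∈ Set.Icc (0:ℝ) c, Y t = U t 0 Y₀ + ∫ s in (0:ℝ)..t, U t s (GY s)) →
      (∀ t ∈ Set.Icc (0:ℝ) c, Z t = U t 0 Z₀ + ∫ s in (0:ℝ)..t, U t s (GZ s)) →
      (∀ s ∈ Set.Icc (0:ℝ) c, ‖GY s - GZ s‖ ≤ b * ‖Y s - Z s‖) →
      ∀ t ∈ Set.Icc (0:ℝ) c, ‖Y t - Z t‖ ≤ (M * ‖Y₀ - Z₀‖) * Real.exp ((M * b) * t) := by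
    intro b hb c hc Y Z Y₀ Z₀ GY GZ hGY hGZ hYc hZc hYe hZe hG
    set φ : ℝ → ℝ := fun t => ‖Y t - Z t‖ with hφdef
    have hφc : ContinuousOn φ (Set.Icc 0 c) := (hYc.sub hZc).norm
    obtain ⟨C, hCb⟩ := isCompact_Icc.exists_bound_of_continuousOn (hYc.sub hZc)
    have hineq : ∀ t ∈ Set.Icc (0:ℝ) c, φ t ≤ M * ‖Y₀ - Z₀‖ + (M * b) * ∫ s in (0:ℝ)..t, φ s := by
      intro t ht
      have ht' : t ∈ Set.Icc (0:ℝ) tstar := ⟨ht.1, ht.2.trans hc.2⟩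
      have hsubt : Set.Icc (0:ℝ) t ⊆ Set.Icc (0:ℝ) c := Set.Icc_subset_Icc le_rfl ht.2
      have hintY : IntervalIntegrable (fun s => U t s (GY s)) volume 0 t :=
        hIntInt t ht' GY (hGY.mono hsubt)
      have hintZ : IntervalIntegrable (fun s => U t s (GZ s)) volume 0 t :=
        hIntInt t ht' GZ (hGZ.mono hsubt)
      have hdiff : Y t - Z t = U t 0 (Y₀ - Z₀) + ∫ s in (0:ℝ)..t, U t s (GY s - GZ s) := by
        rw [hYe t ht, hZe t ht, map_sub]
        have hfun : (fun s => U t s (GY s - GZ s)) = fun s => U t s (GY s) - U t s (GZ s) := by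
          funext s; rw [map_sub]
        rw [hfun, intervalIntegral.integral_sub hintY hintZ]
        abel
      have hterm1 : ‖U t 0 (Y₀ - Z₀)‖ ≤ M * ‖Y₀ - Z₀‖ := by
        calc ‖U t 0 (Y₀ - Z₀)‖ ≤ ‖U t 0‖ * ‖Y₀ - Z₀‖ := ContinuousLinearMap.le_opNorm _ _
          _ ≤ M * ‖Y₀ - Z₀‖ := mul_le_mul_of_nonneg_right
              (hMb ((t, 0) : ℝ × ℝ) ⟨le_rfl, ht.1, ht'.2.trans htsT⟩) (norm_nonneg _)
      have hintφ : IntervalIntegrable (fun s => (M * b) * φ s) volume 0 t := by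
        apply ContinuousOn.intervalIntegrable
        rw [Set.uIcc_of_le ht.1]
        exact (continuousOn_const.mul (hφc.mono hsubt))
      have hterm2 : ‖∫ s in (0:ℝ)..t, U t s (GY s - GZ s)‖ ≤ (M * b) * ∫ s in (0:ℝ)..t, φ s := by
        have hbd : ∀ᵐ s ∂volume.restrict (Set.uIoc (0:ℝ) t),
            ‖U t s (GY s - GZ s)‖ ≤ (M * b) * φ s := by
          filter_upwards [ae_restrict_mem measurableSet_uIoc] with s hs
          have hs' : s ∈ Set.Icc (0:ℝ) c := by
            rw [Set.uIoc_of_le ht.1] at hs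
            exact ⟨hs.1.le, hs.2.trans ht.2⟩
          calc ‖U t s (GY s - GZ s)‖ ≤ ‖U t s‖ * ‖GY s - GZ s‖ :=
                ContinuousLinearMap.le_opNorm _ _
            _ ≤ M * (b * φ s) := by
                apply mul_le_mul ?_ (hG s hs') (norm_nonneg _) hM0
                · apply hMb ((t, s) : ℝ × ℝ)
                  rw [Set.uIoc_of_le ht.1] at hs
                  exact ⟨hs.1.le, hs.2, ht'.2.trans htsT⟩
            _ = (M * b) * φ s := by ring
        have h1 := intervalIntegral.norm_integral_le_abs_of_norm_le hbd hintφ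
        have h2 : (∫ s in (0:ℝ)..t, (M * b) * φ s) = (M * b) * ∫ s in (0:ℝ)..t, φ s :=
          intervalIntegral.integral_const_mul _ _
        have h3 : (0:ℝ) ≤ ∫ s in (0:ℝ)..t, (M * b) * φ s := by
          apply intervalIntegral.integral_nonneg ht.1
          intro s _
          positivity
        rw [abs_of_nonneg h3, h2] at h1
        exact h1
      calc φ t = ‖U t 0 (Y₀ - Z₀) + ∫ s in (0:ℝ)..t, U t s (GY s - GZ s)‖ := by
            rw [hφdef]; simp only; rw [hdiff]
        _ ≤ ‖U t 0 (Y₀ - Z₀)‖ + ‖∫ s in (0:ℝ)..t, U t s (GY s - GZ s)‖ := norm_add_le _ _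
        _ ≤ M * ‖Y₀ - Z₀‖ + (M * b) * ∫ s in (0:ℝ)..t, φ s := add_le_add hterm1 hterm2
    exact gronwall (mul_nonneg hM0 (norm_nonneg _)) (mul_nonneg hM0 hb) φ hφc hCb hineq
  -- initial value recovery
  have hinit : ∀ (Y : ℝ → 𝒳) (Y₀ : 𝒳) (G : ℝ → 𝒳),
      (Y 0 = U 0 0 Y₀ + ∫ s in (0:ℝ)..(0:ℝ), U 0 s (G s)) → Y 0 = Y₀ := by
    intro Y Y₀ G h
    rw [intervalIntegral.integral_same, hUid 0 le_rfl hT.le] at h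
    simpa using h
  -- a priori bound ("bootstrap") for solutions of the original equation
  have boot : ∀ Y₀ : 𝒳, Y₀ ∈ Metric.closedBall X₀ ρ → ∀ Y : ℝ → 𝒳,
      ContinuousOn Y (Set.Icc 0 tstar) →
      (∀ t ∈ Set.Icc (0:ℝ) tstar, Y t = U t 0 Y₀ + ∫ s in (0:ℝ)..t, U t s (F s (Y s))) →
      ∀ t ∈ Set.Icc (0:ℝ) tstar, ‖Y t - X t‖ ≤ 1/2 := by
    intro Y₀ hY₀ Y hYc hYe
    have hρ' : ‖Y₀ - X₀‖ ≤ ρ := mem_closedBall_iff_norm.1 hY₀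
    have hY0 : Y 0 = Y₀ := hinit Y Y₀ _ (hYe 0 ⟨le_rfl, hts0.le⟩)
    have hX0 : X 0 = X₀ := hinit X X₀ _ (hXeq 0 ⟨le_rfl, hts0.le⟩)
    set φ : ℝ → ℝ := fun t => ‖Y t - X t‖ with hφdef
    have hφc : ContinuousOn φ (Set.Icc 0 tstar) := (hYc.sub hXc').norm
    have est : ∀ c : ℝ, c ∈ Set.Icc (0:ℝ) tstar → (∀ s ∈ Set.Icc (0:ℝ) c, φ s ≤ 1) →
        ∀ t ∈ Set.Icc (0:ℝ) c, φ t ≤ 1/2 := by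
      intro c hc hb1 t htc
      have hsubc : Set.Icc (0:ℝ) c ⊆ Set.Icc (0:ℝ) tstar := Set.Icc_subset_Icc le_rfl hc.2
      have hG : ∀ s ∈ Set.Icc (0:ℝ) c, ‖F s (Y s) - F s (X s)‖ ≤ L' * ‖Y s - X s‖ := by
        intro s hs
        have hs' : s ∈ Set.Icc (0:ℝ) tstar := hsubc hs
        have h2 := hXR s hs'
        apply hFlip s hs' _ _ ?_ (by linarith)
        have h1 := hb1 s hs
        calc ‖Y s‖ = ‖(Y s - X s) + X s‖ := by rw [sub_add_cancel]
          _ ≤ ‖Y s - X s‖ + ‖X s‖ := norm_add_le _ _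
          _ ≤ R := by
              have : ‖Y s - X s‖ ≤ 1 := h1
              linarith
      have key := main_est L' hL'0 c hc Y X Y₀ X₀ _ _
        ((hFcomp Y hYc).mono hsubc) ((hFcomp X hXc').mono hsubc)
        (hYc.mono hsubc) (hXc'.mono hsubc)
        (fun t' ht' => hYe t' (hsubc ht')) (fun t' ht' => hXeq t' (hsubc ht')) hG t htc
      have hexpm : Real.exp ((M * L') * t) ≤ Real.exp (2 * M * L' * tstar) := by
        apply Real.exp_le_exp.2
        have h1 : t ≤ tstar := htc.2.trans hc.2
        have h2 : 0 ≤ t := htc.1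
        nlinarith [mul_nonneg hM0 hL'0]
      calc φ t ≤ (M * ‖Y₀ - X₀‖) * Real.exp ((M * L') * t) := key
        _ ≤ (M * ρ) * Real.exp (2 * M * L' * tstar) := by
            apply mul_le_mul (mul_le_mul_of_nonneg_left hρ' hM0) hexpm (Real.exp_pos _).le
              (by positivity)
        _ = K * ρ := by rw [hKdef]; ring
        _ = 1/2 := hρK
    set S : Set ℝ := {c | c ∈ Set.Icc (0:ℝ) tstar ∧ ∀ s ∈ Set.Icc (0:ℝ) c, φ s ≤ 1} with hSdef
    have h0S : (0:ℝ) ∈ S := by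
      refine ⟨⟨le_rfl, hts0.le⟩, ?_⟩
      intro s hs
      have hs0 : s = 0 := le_antisymm hs.2 hs.1
      rw [hs0]
      have : φ 0 = ‖Y₀ - X₀‖ := by rw [hφdef]; simp only; rw [hY0, hX0]
      rw [this]
      linarith
    have hSbd : BddAbove S := ⟨tstar, fun c hc => hc.1.2⟩
    set c := sSup S with hcdef
    have hcIcc : c ∈ Set.Icc (0:ℝ) tstar :=
      ⟨le_csSup hSbd h0S, csSup_le ⟨0, h0S⟩ (fun x hx => hx.1.2)⟩
    have hlt1 : ∀ s : ℝ, 0 ≤ s → s < c → φ s ≤ 1 := by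
      intro s hs0 hsc
      obtain ⟨c', hc'S, hsc'⟩ := exists_lt_of_lt_csSup ⟨0, h0S⟩ hsc
      exact hc'S.2 s ⟨hs0, hsc'.le⟩
    have hcS : ∀ s ∈ Set.Icc (0:ℝ) c, φ s ≤ 1 := by
      intro s hs
      rcases lt_or_eq_of_le hs.2 with hlt | heq
      · exact hlt1 s hs.1 hlt
      · by_cases hc0 : c = 0
        · rw [heq, hc0]
          exact h0S.2 0 ⟨le_rfl, le_rfl⟩
        · have hc0' : (0:ℝ) < c := lt_of_le_of_ne hcIcc.1 (Ne.symm hc0)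
          rw [heq]
          have hne : (nhdsWithin c (Set.Ico 0 c)).NeBot := by
            apply mem_closure_iff_nhdsWithin_neBot.1
            rw [closure_Ico hc0'.ne]
            exact ⟨hcIcc.1, le_rfl⟩
          have htd : Filter.Tendsto φ (nhdsWithin c (Set.Ico 0 c)) (nhds (φ c)) := by
            apply Filter.Tendsto.mono_left (hφc c hcIcc)
            apply nhdsWithin_mono
            intro x hx
            exact ⟨hx.1, hx.2.le.trans hcIcc.2⟩
          apply le_of_tendsto htd
          filter_upwards [self_mem_nhdsWithin] with s' hs'
          exact hlt1 s' hs'.1 hs'.2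
    have hceq : c = tstar := by
      by_contra hnee
      have hclt : c < tstar := lt_of_le_of_ne hcIcc.2 hnee
      have h12 : φ c ≤ 1/2 := est c hcIcc hcS c ⟨hcIcc.1, le_rfl⟩
      have hcw : ContinuousWithinAt φ (Set.Icc 0 tstar) c := hφc c hcIcc
      have hev : ∀ᶠ s in nhdsWithin c (Set.Icc 0 tstar), φ s < 1 :=
        Filter.Tendsto.eventually_lt_const (by linarith) hcw
      have hev' : {s | φ s < 1} ∈ nhdsWithin c (Set.Icc 0 tstar) := hev
      rw [Metric.mem_nhdsWithin_iff] at hev'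
      obtain ⟨δ, hδ0, hδ⟩ := hev' 
      set t' := min tstar (c + δ/2) with ht'def
      have hct' : c < t' := lt_min hclt (by linarith)
      have ht'mem : t' ∈ Set.Icc (0:ℝ) tstar := ⟨le_trans hcIcc.1 hct'.le, min_le_left _ _⟩
      have ht'S : t' ∈ S := by
        refine ⟨ht'mem, ?_⟩
        intro s hs
        rcases le_or_gt s c with h | h
        · exact hcS s ⟨hs.1, h⟩
        · apply le_of_lt
          have hmem : s ∈ Metric.ball c δ ∩ Set.Icc 0 tstar := by
            constructor
            · rw [Metric.mem_ball, Real.dist_eq, abs_of_pos (by linarith)]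
              have : s ≤ c + δ/2 := hs.2.trans (min_le_right _ _)
              linarith
            · exact ⟨hs.1, hs.2.trans ht'mem.2⟩
          exact hδ hmem
      have := le_csSup hSbd ht'S
      rw [← hcdef] at this
      exact absurd this (not_le.2 hct')
    intro t ht
    rw [hceq] at hcS
    exact est tstar ⟨hts0.le, le_rfl⟩ hcS t ht
  -- truncated nonlinearity
  set Ftil : ℝ → 𝒳 → 𝒳 := fun t x => F t (rad R x) with hFtildef
  have hFtlip : ∀ t ∈ Set.Icc (0:ℝ) tstar, ∀ x y : 𝒳,
      ‖Ftil t x - Ftil t y‖ ≤ (2 * L') * ‖x - y‖ := by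
    intro t ht x y
    calc ‖Ftil t x - Ftil t y‖ = ‖F t (rad R x) - F t (rad R y)‖ := rfl
      _ ≤ L' * ‖rad R x - rad R y‖ :=
          hFlip t ht _ _ (rad_norm_le hR0.le _) (rad_norm_le hR0.le _)
      _ ≤ L' * (2 * ‖x - y‖) := mul_le_mul_of_nonneg_left (rad_lip hR0.le x y) hL'0
      _ = (2 * L') * ‖x - y‖ := by ring
  have hFtilX : ∀ s ∈ Set.Icc (0:ℝ) tstar, Ftil s (X s) = F s (X s) := by
    intro s hs
    show F s (rad R (X s)) = F s (X s)
    rw [rad_eq_self ((hXR s hs).trans (by linarith))]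
  have hFtcont : ∀ W : ℝ → 𝒳, Continuous W →
      ContinuousOn (fun s => Ftil s (W s)) (Set.Icc 0 tstar) := by
    intro W hW
    have : ContinuousOn ((fun p : ℝ × 𝒳 => F p.1 p.2) ∘
        (fun s : ℝ => ((s, rad R (W s)) : ℝ × 𝒳))) (Set.Icc 0 tstar) := by
      apply hF.comp
      · exact Continuous.continuousOn
          (continuous_id.prodMk ((rad_continuous hR0.le).comp hW))
      · exact fun s hs => ⟨⟨hs.1, hs.2.trans htsT⟩, trivial⟩
    exact this
  refine ⟨ρ, hρ0, K, hK0.le, ?_, ?_⟩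
  · -- Existence by Picard iteration (on the truncated equation)
    intro Y₀ hY₀
    have hle : (0:ℝ) ≤ tstar := hts0.le
    haveI : Nonempty C(Set.Icc (0:ℝ) tstar, 𝒳) := ⟨ContinuousMap.const _ 0⟩
    -- the Picard map
    have hΦcont : ∀ u : C(Set.Icc (0:ℝ) tstar, 𝒳), ContinuousOn
        (fun t : ℝ => U t 0 Y₀ +
          ∫ s in (0:ℝ)..t, U (max t s) s (Ftil s (Set.IccExtend hle ⇑u s)))
        (Set.Icc 0 tstar) := by
      intro u
      apply ContinuousOn.add
      · have : ContinuousOn ((fun p : ℝ × ℝ => U p.1 p.2 Y₀) ∘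
            (fun t : ℝ => ((t, 0) : ℝ × ℝ))) (Set.Icc 0 tstar) :=
          (hUcont' Y₀).comp (Continuous.continuousOn (by fun_prop))
            (fun t ht => ⟨le_rfl, ht.1, ht.2.trans htsT⟩)
        exact this
      · exact cont_param_integral U hUj M hMb hle htsT _
          (hFtcont _ (u.continuous.Icc_extend'))
    set Φ : C(Set.Icc (0:ℝ) tstar, 𝒳) → C(Set.Icc (0:ℝ) tstar, 𝒳) := fun u =>
      ⟨(Set.Icc (0:ℝ) tstar).restrict
        (fun t : ℝ => U t 0 Y₀ +
          ∫ s in (0:ℝ)..t, U (max t s) s (Ftil s (Set.IccExtend hle ⇑u s))),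
        (hΦcont u).restrict⟩ with hΦdef
    -- iterated contraction estimate
    have hiter : ∀ n : ℕ, ∀ u v : C(Set.Icc (0:ℝ) tstar, 𝒳), ∀ t : Set.Icc (0:ℝ) tstar,
        ‖(Φ^[n] u) t - (Φ^[n] v) t‖
          ≤ (2*M*L')^n * (t:ℝ)^n / n.factorial * dist u v := by
      intro n
      induction n with
      | zero =>
        intro u v t
        simp only [Function.iterate_zero, id_eq, pow_zero, Nat.factorial_zero, Nat.cast_one]
        rw [← dist_eq_norm]
        simpa using ContinuousMap.dist_apply_le_dist t
      | succ n ih =>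
        intro u v t
        rw [Function.iterate_succ_apply', Function.iterate_succ_apply']
        set p := Φ^[n] u with hpdef
        set q := Φ^[n] v with hqdef
        have htmem : (t:ℝ) ∈ Set.Icc (0:ℝ) tstar := t.2
        have hsubt : Set.Icc (0:ℝ) (t:ℝ) ⊆ Set.Icc (0:ℝ) tstar :=
          Set.Icc_subset_Icc le_rfl htmem.2
        have hintp : IntervalIntegrable
            (fun s => U (max (t:ℝ) s) s (Ftil s (Set.IccExtend hle ⇑p s))) volume 0 (t:ℝ) := by
          apply ContinuousOn.intervalIntegrable
          rw [Set.uIcc_of_le htmem.1]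
          exact (cont_gmax U hUj htsT _ (hFtcont _ (p.continuous.Icc_extend')) (t:ℝ) htmem).mono
            hsubt
        have hintq : IntervalIntegrable
            (fun s => U (max (t:ℝ) s) s (Ftil s (Set.IccExtend hle ⇑q s))) volume 0 (t:ℝ) := by
          apply ContinuousOn.intervalIntegrable
          rw [Set.uIcc_of_le htmem.1]
          exact (cont_gmax U hUj htsT _ (hFtcont _ (q.continuous.Icc_extend')) (t:ℝ) htmem).mono
            hsubt
        have hdiff : (Φ p) t - (Φ q) t
            = ∫ s in (0:ℝ)..(t:ℝ),
                (U (max (t:ℝ) s) s (Ftil s (Set.IccExtend hle ⇑p s))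
                  - U (max (t:ℝ) s) s (Ftil s (Set.IccExtend hle ⇑q s))) := by
          show (U (t:ℝ) 0 Y₀ + _) - (U (t:ℝ) 0 Y₀ + _) = _
          rw [intervalIntegral.integral_sub hintp hintq]
          abel
        set cc : ℝ := (2*M*L') * ((2*M*L')^n / n.factorial * dist u v) with hccdef
        have hcc0 : 0 ≤ cc := by
          rw [hccdef]
          have : (0:ℝ) ≤ dist u v := dist_nonneg
          positivity
        have hbd : ∀ᵐ s ∂volume.restrict (Set.uIoc (0:ℝ) (t:ℝ)),
            ‖U (max (t:ℝ) s) s (Ftil s (Set.IccExtend hle ⇑p s))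
              - U (max (t:ℝ) s) s (Ftil s (Set.IccExtend hle ⇑q s))‖ ≤ cc * s^n := by
          filter_upwards [ae_restrict_mem measurableSet_uIoc] with s hs
          rw [Set.uIoc_of_le htmem.1] at hs
          have hsmem : s ∈ Set.Icc (0:ℝ) tstar := ⟨hs.1.le, hs.2.trans htmem.2⟩
          have hextp : Set.IccExtend hle ⇑p s = p ⟨s, hsmem⟩ := Set.IccExtend_of_mem hle _ hsmem
          have hextq : Set.IccExtend hle ⇑q s = q ⟨s, hsmem⟩ := Set.IccExtend_of_mem hle _ hsmem
          have htri' : ((max (t:ℝ) s, s) : ℝ × ℝ) ∈ tri T :=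
            ⟨hs.1.le, le_max_right _ _, max_le (htmem.2.trans htsT) (hsmem.2.trans htsT)⟩
          calc ‖U (max (t:ℝ) s) s (Ftil s (Set.IccExtend hle ⇑p s))
                - U (max (t:ℝ) s) s (Ftil s (Set.IccExtend hle ⇑q s))‖
              = ‖U (max (t:ℝ) s) s (Ftil s (Set.IccExtend hle ⇑p s)
                  - Ftil s (Set.IccExtend hle ⇑q s))‖ := by rw [map_sub]
            _ ≤ ‖U (max (t:ℝ) s) s‖ * ‖Ftil s (Set.IccExtend hle ⇑p s)
                  - Ftil s (Set.IccExtend hle ⇑q s)‖ := ContinuousLinearMap.le_opNorm _ _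
            _ ≤ M * ((2*L') * ‖Set.IccExtend hle ⇑p s - Set.IccExtend hle ⇑q s‖) := by
                apply mul_le_mul (hMb _ htri') (hFtlip s hsmem _ _) (norm_nonneg _) hM0
            _ ≤ M * ((2*L') * ((2*M*L')^n * s^n / n.factorial * dist u v)) := by
                apply mul_le_mul_of_nonneg_left _ hM0
                apply mul_le_mul_of_nonneg_left _ (by positivity)
                rw [hextp, hextq]
                exact ih u v ⟨s, hsmem⟩
            _ = cc * s^n := by rw [hccdef]; ring
        have hccint : IntervalIntegrable (fun s => cc * s^n) volume 0 (t:ℝ) :=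
          Continuous.intervalIntegrable (by fun_prop) 0 (t:ℝ)
        have h1 := intervalIntegral.norm_integral_le_abs_of_norm_le hbd hccint
        have h2 : (∫ s in (0:ℝ)..(t:ℝ), cc * s^n) = cc * ((t:ℝ)^(n+1) / (n+1)) := by
          rw [intervalIntegral.integral_const_mul, integral_pow, zero_pow (Nat.succ_ne_zero n)]
          push_cast
          ring
        have h3 : (0:ℝ) ≤ cc * ((t:ℝ)^(n+1) / (n+1)) := by
          have ht0 : (0:ℝ) ≤ (t:ℝ) := htmem.1
          positivity
        rw [h2, abs_of_nonneg h3] at h1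
        rw [hdiff]
        refine h1.trans (le_of_eq ?_)
        rw [hccdef]
        have hfac : ((n+1).factorial : ℝ) = (n+1) * n.factorial := by
          push_cast [Nat.factorial_succ]; ring
        rw [hfac]
        have hn1 : ((n:ℝ)+1) ≠ 0 := by positivity
        have hnf : ((n.factorial:ℝ)) ≠ 0 := Nat.cast_ne_zero.2 n.factorial_ne_zero
        field_simp
        ring
    have hdist : ∀ n : ℕ, ∀ u v : C(Set.Icc (0:ℝ) tstar, 𝒳),
        dist (Φ^[n] u) (Φ^[n] v) ≤ ((2*M*L'*tstar)^n / n.factorial) * dist u v := by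
      intro n u v
      have hnn : (0:ℝ) ≤ ((2*M*L'*tstar)^n / n.factorial) * dist u v := by
        have : (0:ℝ) ≤ dist u v := dist_nonneg
        positivity
      rw [ContinuousMap.dist_le hnn]
      intro t
      rw [dist_eq_norm]
      refine (hiter n u v t).trans ?_
      have htp : (t:ℝ)^n ≤ tstar^n := pow_le_pow_left₀ t.2.1 t.2.2 n
      have hrw : (2*M*L'*tstar)^n = (2*M*L')^n * tstar^n := by rw [← mul_pow]
      rw [hrw]
      have hfac : (0:ℝ) < n.factorial := by exact_mod_cast n.factorial_pos
      have hd : (0:ℝ) ≤ dist u v := dist_nonneg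
      have h2ML : (0:ℝ) ≤ (2*M*L')^n := by positivity
      have hstep : (2*M*L')^n * (t:ℝ)^n ≤ (2*M*L')^n * tstar^n :=
        mul_le_mul_of_nonneg_left htp h2ML
      exact mul_le_mul_of_nonneg_right (by gcongr) hd
    obtain ⟨n, hn⟩ := (Filter.Tendsto.eventually_lt_const one_pos
      (FloorSemiring.tendsto_pow_div_factorial_atTop (K := ℝ) (2*M*L'*tstar))).exists
    have hnn : (0:ℝ) ≤ (2*M*L'*tstar)^n / n.factorial := by positivity
    set Kc : NNReal := Real.toNNReal ((2*M*L'*tstar)^n / n.factorial) with hKcdef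
    have hKc1 : Kc < 1 := by
      rw [← NNReal.coe_lt_coe, hKcdef, Real.coe_toNNReal _ hnn, NNReal.coe_one]
      exact hn
    have hlipΦ : LipschitzWith Kc (Φ^[n]) := by
      apply LipschitzWith.of_dist_le_mul
      intro u v
      rw [hKcdef, Real.coe_toNNReal _ hnn]
      exact hdist n u v
    have hcontr : ContractingWith Kc (Φ^[n]) := ⟨hKc1, hlipΦ⟩
    have hfix : Function.IsFixedPt Φ (ContractingWith.fixedPoint (Φ^[n]) hcontr) :=
      ContractingWith.isFixedPt_fixedPoint_iterate hcontr
    set Yc := ContractingWith.fixedPoint (Φ^[n]) hcontr with hYcdef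
    set Yf : ℝ → 𝒳 := Set.IccExtend hle ⇑Yc with hYfdef
    have hYfc : Continuous Yf := Yc.continuous.Icc_extend'
    have hYtr : ∀ t ∈ Set.Icc (0:ℝ) tstar,
        Yf t = U t 0 Y₀ + ∫ s in (0:ℝ)..t, U t s (Ftil s (Yf s)) := by
      intro t ht
      have h1 : Yf t = Yc ⟨t, ht⟩ := Set.IccExtend_of_mem hle _ ht
      have h2 : Yc ⟨t, ht⟩ = (Φ Yc) ⟨t, ht⟩ := by rw [hfix]
      have h3 : (Φ Yc) ⟨t, ht⟩
          = U t 0 Y₀ + ∫ s in (0:ℝ)..t, U (max t s) s (Ftil s (Yf s)) := rfl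
      rw [h1, h2, h3]
      congr 1
      apply intervalIntegral.integral_congr
      intro s hs
      rw [Set.uIcc_of_le ht.1] at hs
      simp only
      rw [max_eq_left hs.2]
    have hYap : ∀ t ∈ Set.Icc (0:ℝ) tstar, ‖Yf t - X t‖ ≤ 1/2 := by
      have hG : ∀ s ∈ Set.Icc (0:ℝ) tstar,
          ‖Ftil s (Yf s) - F s (X s)‖ ≤ (2*L') * ‖Yf s - X s‖ := by
        intro s hs
        rw [← hFtilX s hs]
        exact hFtlip s hs _ _
      have key := main_est (2*L') (by positivity) tstar ⟨hts0.le, le_rfl⟩ Yf X Y₀ X₀ _ _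
        (hFtcont _ hYfc) (hFcomp X hXc') hYfc.continuousOn hXc' hYtr hXeq hG
      intro t ht
      have hρ' : ‖Y₀ - X₀‖ ≤ ρ := mem_closedBall_iff_norm.1 hY₀
      have hexpm : Real.exp ((M * (2*L')) * t) ≤ Real.exp (2 * M * L' * tstar) := by
        apply Real.exp_le_exp.2
        have h1 : t ≤ tstar := ht.2
        have h2 : 0 ≤ t := ht.1
        nlinarith [mul_nonneg hM0 hL'0]
      calc ‖Yf t - X t‖ ≤ (M * ‖Y₀ - X₀‖) * Real.exp ((M * (2*L')) * t) := key t ht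
        _ ≤ (M * ρ) * Real.exp (2 * M * L' * tstar) := by
            apply mul_le_mul (mul_le_mul_of_nonneg_left hρ' hM0) hexpm (Real.exp_pos _).le
              (by positivity)
        _ = K * ρ := by rw [hKdef]; ring
        _ = 1/2 := hρK
    have hYR : ∀ s ∈ Set.Icc (0:ℝ) tstar, ‖Yf s‖ ≤ R := by
      intro s hs
      have h1 := hYap s hs
      have h2 := hXR s hs
      calc ‖Yf s‖ = ‖(Yf s - X s) + X s‖ := by rw [sub_add_cancel]
        _ ≤ ‖Yf s - X s‖ + ‖X s‖ := norm_add_le _ _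
        _ ≤ R := by linarith
    refine ⟨Yf, hYfc.continuousOn, ?_⟩
    intro t ht
    rw [hYtr t ht]
    congr 1
    apply intervalIntegral.integral_congr
    intro s hs
    rw [Set.uIcc_of_le ht.1] at hs
    have hsmem : s ∈ Set.Icc (0:ℝ) tstar := ⟨hs.1, hs.2.trans ht.2⟩
    simp only
    show U t s (Ftil s (Yf s)) = U t s (F s (Yf s))
    congr 1
    show F s (rad R (Yf s)) = F s (Yf s)
    rw [rad_eq_self (hYR s hsmem)]
  · -- Lipschitz dependence
    intro Y₀ Z₀ hY₀ hZ₀ Y Z hYc hYe hZc hZe t ht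
    have hYb := boot Y₀ hY₀ Y hYc hYe
    have hZb := boot Z₀ hZ₀ Z hZc hZe
    have hbound : ∀ (W : ℝ → 𝒳), (∀ s ∈ Set.Icc (0:ℝ) tstar, ‖W s - X s‖ ≤ 1/2) →
        ∀ s ∈ Set.Icc (0:ℝ) tstar, ‖W s‖ ≤ R := by
      intro W hW s hs
      have h2 := hXR s hs
      calc ‖W s‖ = ‖(W s - X s) + X s‖ := by rw [sub_add_cancel]
        _ ≤ ‖W s - X s‖ + ‖X s‖ := norm_add_le _ _
        _ ≤ R := by
            have := hW s hs
            linarith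
    have hG : ∀ s ∈ Set.Icc (0:ℝ) tstar, ‖F s (Y s) - F s (Z s)‖ ≤ L' * ‖Y s - Z s‖ :=
      fun s hs => hFlip s hs _ _ (hbound Y hYb s hs) (hbound Z hZb s hs)
    have key := main_est L' hL'0 tstar ⟨hts0.le, le_rfl⟩ Y Z Y₀ Z₀ _ _
      (hFcomp Y hYc) (hFcomp Z hZc) hYc hZc hYe hZe hG t ht
    have hexpm : Real.exp ((M * L') * t) ≤ Real.exp (2 * M * L' * tstar) := by
      apply Real.exp_le_exp.2
      have h1 : t ≤ tstar := ht.2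
      have h2 : 0 ≤ t := ht.1
      nlinarith [mul_nonneg hM0 hL'0]
    calc ‖Y t - Z t‖ ≤ (M * ‖Y₀ - Z₀‖) * Real.exp ((M * L') * t) := key
      _ ≤ (M * ‖Y₀ - Z₀‖) * Real.exp (2 * M * L' * tstar) :=
          mul_le_mul_of_nonneg_left hexpm (by positivity)
      _ = K * ‖Y₀ - Z₀‖ := by rw [hKdef]; ring

-- PLACEHOLDER_REST
end
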